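/- arXiv:2004.02244 — 6 statements merged into one kernel-verified Lean document; each statement's English description precedes it below -/
import Mathlib

section
/- For r ≥ 2 and any (a,b) ∈ ℝ × ℝ, the gradient ∇φ_r(a,b) = (a_+^{r-1} b_+^r − (-a)_+^{r-1}, a_+^r b_+^{r-1} − (-b)_+^{r-1}) vanishes if and only if φ_r(a,b) = 0. -/
noncomputable def phi (r a b : ℝ) : ℝ :=
  (1 / r) * ((max a 0) ^ r * (max b 0) ^ r + (max (-a) 0) ^ r + (max (-b) 0) ^ r)

theorem stmt_3 (r : ℝ) (hr : 2 ≤ r) (a b : ℝ) :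
    ((max a 0) ^ (r - 1) * (max b 0) ^ r - (max (-a) 0) ^ (r - 1) = 0 ∧
     (max a 0) ^ r * (max b 0) ^ (r - 1) - (max (-b) 0) ^ (r - 1) = 0)
    ↔ phi r a b = 0 := by
  have hr0 : (0:ℝ) < r := by linarith
  have hr0' : r ≠ 0 := ne_of_gt hr0
  have hr1 : (0:ℝ) < r - 1 := by linarith
  have hr1' : r - 1 ≠ 0 := ne_of_gt hr1
  -- key characterization
  have key : ∀ x : ℝ, ∀ s : ℝ, s ≠ 0 → 0 ≤ x → (x ^ s = 0 ↔ x = 0) := by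
    intro x s hs hx
    rw [Real.rpow_eq_zero hx hs]
  constructor
  · rintro ⟨h1, h2⟩
    have ha : 0 ≤ a := by
      by_contra ha
      push_neg at ha
      have hmaxa : max a 0 = 0 := max_eq_right ha.le
      have hmaxna : max (-a) 0 = -a := max_eq_left (by linarith)
      rw [hmaxa, hmaxna, Real.zero_rpow hr1', zero_mul, zero_sub, neg_eq_zero] at h1
      exact absurd h1 (ne_of_gt (Real.rpow_pos_of_pos (by linarith) _))
    have hb : 0 ≤ b := by
      by_contra hb
      push_neg at hb
      have hmaxb : max b 0 = 0 := max_eq_right hb.le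
      have hmaxnb : max (-b) 0 = -b := max_eq_left (by linarith)
      rw [hmaxb, hmaxnb, Real.zero_rpow hr1', mul_zero, zero_sub, neg_eq_zero] at h2
      exact absurd h2 (ne_of_gt (Real.rpow_pos_of_pos (by linarith) _))
    have hmaxa : max a 0 = a := max_eq_left ha
    have hmaxb : max b 0 = b := max_eq_left hb
    have hmaxna : max (-a) 0 = 0 := max_eq_right (by linarith)
    have hmaxnb : max (-b) 0 = 0 := max_eq_right (by linarith)
    rw [hmaxa, hmaxb, hmaxna, Real.zero_rpow hr1', sub_zero] at h1
    have hab : a = 0 ∨ b = 0 := by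
      rcases mul_eq_zero.mp h1 with h | h
      · exact Or.inl ((key a (r-1) hr1' ha).mp h)
      · exact Or.inr ((key b r hr0' hb).mp h)
    unfold phi
    rw [hmaxa, hmaxb, hmaxna, hmaxnb, Real.zero_rpow hr0']
    rcases hab with h | h
    · rw [h, Real.zero_rpow hr0']; ring
    · rw [h, Real.zero_rpow hr0']; ring
  · intro h
    unfold phi at h
    have hsum : (max a 0) ^ r * (max b 0) ^ r + (max (-a) 0) ^ r + (max (-b) 0) ^ r = 0 := by
      rcases mul_eq_zero.mp h with h | h
      · exact absurd h (by positivity)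
      · exact h
    have t1 : 0 ≤ (max a 0) ^ r * (max b 0) ^ r :=
      mul_nonneg (Real.rpow_nonneg (le_max_right _ _) _) (Real.rpow_nonneg (le_max_right _ _) _)
    have t2 : 0 ≤ (max (-a) 0) ^ r := Real.rpow_nonneg (le_max_right _ _) _
    have t3 : 0 ≤ (max (-b) 0) ^ r := Real.rpow_nonneg (le_max_right _ _) _
    have e1 : (max a 0) ^ r * (max b 0) ^ r = 0 := by linarith
    have e2 : (max (-a) 0) ^ r = 0 := by linarith
    have e3 : (max (-b) 0) ^ r = 0 := by linarith
    have hna : max (-a) 0 = 0 := (key _ r hr0' (le_max_right _ _)).mp e2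
    have hnb : max (-b) 0 = 0 := (key _ r hr0' (le_max_right _ _)).mp e3
    have hab : max a 0 = 0 ∨ max b 0 = 0 := by
      rcases mul_eq_zero.mp e1 with h' | h'
      · exact Or.inl ((key _ r hr0' (le_max_right _ _)).mp h')
      · exact Or.inr ((key _ r hr0' (le_max_right _ _)).mp h')
    rw [hna, hnb, Real.zero_rpow hr1', sub_zero, sub_zero]
    rcases hab with h' | h'
    · rw [h', Real.zero_rpow hr1', Real.zero_rpow hr0', zero_mul, zero_mul]
      exact ⟨rfl, rfl⟩
    · rw [h', Real.zero_rpow hr1', Real.zero_rpow hr0', mul_zero, mul_zero]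
      exact ⟨rfl, rfl⟩
end

section
/- A matrix A ∈ ℝ^{n×n} is a P-matrix (all principal minors positive) if and only if for every nonzero x ∈ ℝⁿ there exists an index i with x_i (Ax)_i > 0. -/
open Matrix

/-- A P-matrix: all principal minors are positive. -/
def IsPMatrix {m : Type*} [Fintype m] [DecidableEq m] (A : Matrix m m ℝ) : Prop :=
  ∀ T : Finset m, T.Nonempty →
    0 < (A.submatrix (fun i : T => (i : m)) (fun i : T => (i : m))).det

/-- A P_s-matrix: all principal minors of order up to `s` are positive. -/
def IsPsMatrix {m : Type*} [Fintype m] [DecidableEq m] (s : ℕ) (A : Matrix m m ℝ) : Prop :=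
  ∀ T : Finset m, T.Nonempty → T.card ≤ s →
    0 < (A.submatrix (fun i : T => (i : m)) (fun i : T => (i : m))).det

section Aux

open Finset

variable {m : Type*} [Fintype m] [DecidableEq m]

lemma det_piecewise_single (A : Matrix m m ℝ) (s : Finset m) :
    (Matrix.of (s.piecewise (fun i => A i) (fun i => (Pi.single i 1 : m → ℝ)))).det
      = (A.submatrix (fun i : s => (i : m)) (fun i : s => (i : m))).det := by
  classical
  set M : Matrix m m ℝ := Matrix.of (s.piecewise (fun i => A i) (fun i => (Pi.single i 1 : m → ℝ)))
  rw [← Matrix.det_submatrix_equiv_self (Equiv.sumCompl (· ∈ s)) M]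
  have : M.submatrix (Equiv.sumCompl (· ∈ s)) (Equiv.sumCompl (· ∈ s)) =
      Matrix.fromBlocks (A.submatrix (fun i : s => (i:m)) (fun i : s => (i:m)))
        (A.submatrix (fun i : s => (i:m)) (fun j : {a // ¬ a ∈ s} => (j:m)))
        0 1 := by
    ext i j
    rcases i with i | i <;> rcases j with j | j
    · simp [M, Finset.piecewise, i.2]
    · simp [M, Finset.piecewise, i.2]
    · have : (i : m) ≠ (j : m) := fun h => i.2 (h ▸ j.2)
      simp [M, Finset.piecewise, i.2, Pi.single_apply, this, eq_comm]
    · simp [M, Finset.piecewise, i.2, Pi.single_apply, Matrix.one_apply, Subtype.ext_iff, eq_comm]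
  rw [this, Matrix.det_fromBlocks_zero₂₁, Matrix.det_one, mul_one]

lemma det_add_diagonal (A : Matrix m m ℝ) (d : m → ℝ) :
    (A + Matrix.diagonal d).det =
      ∑ s : Finset m, (∏ i ∈ sᶜ, d i) *
        (A.submatrix (fun i : s => (i : m)) (fun i : s => (i : m))).det := by
  classical
  have hrow : (A + Matrix.diagonal d) =
      Matrix.of ((fun i => A i) + fun i => d i • (Pi.single i 1 : m → ℝ)) := by
    ext i j
    by_cases h : i = j <;> simp [Matrix.diagonal_apply, Pi.single_apply, h, eq_comm]
  rw [hrow]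
  have hdet : ∀ N : m → m → ℝ, (Matrix.of N).det = Matrix.detRowAlternating N := fun _ => rfl
  have key := (Matrix.detRowAlternating (R := ℝ) (n := m)).toMultilinearMap.map_add_univ
      (fun i => A i) (fun i => d i • (Pi.single i 1 : m → ℝ))
  simp only [AlternatingMap.coe_multilinearMap] at key
  rw [hdet, key]
  refine Finset.sum_congr rfl fun s _ => ?_
  have h1 : s.piecewise (fun i => A i) (fun i => d i • (Pi.single i 1 : m → ℝ))
      = fun i => (if i ∈ s then 1 else d i) •
          (s.piecewise (fun i => A i) (fun i => (Pi.single i 1 : m → ℝ))) i := by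
    ext i j
    by_cases h : i ∈ s <;> simp [Finset.piecewise, h]
  have key2 := (Matrix.detRowAlternating (R := ℝ) (n := m)).toMultilinearMap.map_smul_univ
      (fun i => if i ∈ s then (1:ℝ) else d i)
      (s.piecewise (fun i => A i) (fun i => (Pi.single i 1 : m → ℝ)))
  simp only [AlternatingMap.coe_multilinearMap] at key2
  rw [h1, key2]
  have h2 : (∏ i, if i ∈ s then (1:ℝ) else d i) = ∏ i ∈ sᶜ, d i := by
    rw [Finset.prod_ite, Finset.prod_const_one, one_mul]
    congr 1
    ext i; simp
  rw [h2, smul_eq_mul, ← hdet, det_piecewise_single]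

lemma det_pos_of_sign (B : Matrix m m ℝ)
    (h : ∀ y : m → ℝ, y ≠ 0 → ∃ i, 0 < y i * B.mulVec y i) : 0 < B.det := by
  classical
  set f : ℝ → ℝ := fun t => ((1 - t) • (1 : Matrix m m ℝ) + t • B).det with hf
  have hc : Continuous f := by
    apply Continuous.matrix_det
    fun_prop
  have hne : ∀ t ∈ Set.Icc (0:ℝ) 1, f t ≠ 0 := by
    rintro t ⟨ht0, ht1⟩ h0
    obtain ⟨v, hv, hMv⟩ := (Matrix.exists_mulVec_eq_zero_iff).mpr h0
    obtain ⟨i, hi⟩ := h v hv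
    have hrow : (1 - t) * v i + t * B.mulVec v i = 0 := by
      have := congrFun hMv i
      simpa [Matrix.add_mulVec, Matrix.smul_mulVec, Matrix.one_mulVec] using this
    have hne0 : v i ≠ 0 := fun h' => by simp [h'] at hi
    have hvi : 0 < v i * v i := mul_self_pos.mpr hne0
    have h2 : (1 - t) * (v i * v i) + t * (v i * B.mulVec v i) = 0 := by
      calc (1 - t) * (v i * v i) + t * (v i * B.mulVec v i)
          = v i * ((1 - t) * v i + t * B.mulVec v i) := by ring
        _ = 0 := by rw [hrow, mul_zero]
    rcases ht0.eq_or_lt with rfl | htpos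
    · nlinarith [hvi]
    · have hpos : 0 < t * (v i * B.mulVec v i) := mul_pos htpos hi
      nlinarith [mul_nonneg (sub_nonneg.2 ht1) hvi.le]
  have h0 : f 0 = 1 := by simp [hf]
  have h1 : f 1 = B.det := by simp [hf]
  by_contra hd
  have hlt : f 1 < 0 := lt_of_le_of_ne (h1 ▸ not_lt.mp hd) (hne 1 (by norm_num))
  obtain ⟨t, ht, hft⟩ := intermediate_value_Icc' (zero_le_one) hc.continuousOn
    (Set.mem_Icc.mpr ⟨hlt.le, by rw [h0]; norm_num⟩)
  exact hne t ht hft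

lemma principal_minor_comp (A : Matrix m m ℝ) (S : Finset m) (s : Finset {x // x ∈ S}) :
    ((A.submatrix (fun i : S => (i:m)) (fun i : S => (i:m))).submatrix
        (fun i : s => (i : {x // x ∈ S})) (fun i : s => (i : {x // x ∈ S}))).det
    = (A.submatrix
        (fun i : (s.map ⟨Subtype.val, Subtype.val_injective⟩ : Finset m) => (i:m))
        (fun i : (s.map ⟨Subtype.val, Subtype.val_injective⟩ : Finset m) => (i:m))).det := by
  classical
  set T' : Finset m := s.map ⟨Subtype.val, Subtype.val_injective⟩ with hT'
  have hmem : ∀ y : {y // y ∈ T'}, (y : m) ∈ S := by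
    rintro ⟨y, hy⟩
    obtain ⟨a, -, h⟩ := Finset.mem_map.mp hy
    have h' : (a : m) = y := h
    exact h' ▸ a.2
  let e : {x // x ∈ s} ≃ {y // y ∈ T'} :=
    { toFun := fun x => ⟨x.1.1, Finset.mem_map_of_mem _ x.2⟩
      invFun := fun y => ⟨⟨y.1, hmem y⟩, by
          obtain ⟨a, ha, h⟩ := Finset.mem_map.mp y.2
          have h' : (a : m) = y.1 := h
          have : (⟨y.1, hmem y⟩ : {x // x ∈ S}) = a := Subtype.ext h'.symm
          rw [this]; exact ha⟩
      left_inv := fun x => rfl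
      right_inv := fun y => rfl }
  rw [Matrix.submatrix_submatrix]
  have h : A.submatrix ((fun i : S => (i:m)) ∘ (fun i : s => (i : {x // x ∈ S})))
      ((fun i : S => (i:m)) ∘ (fun i : s => (i : {x // x ∈ S})))
      = (A.submatrix (fun i : T' => (i:m)) (fun i : T' => (i:m))).submatrix e e := rfl
  rw [h, Matrix.det_submatrix_equiv_self]

lemma sign_of_isPMatrix [Nonempty m] (B : Matrix m m ℝ) (hB : IsPMatrix B)
    (y : m → ℝ) (hy : ∀ i, y i ≠ 0) : ∃ i, 0 < y i * B.mulVec y i := by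
  classical
  by_contra hcon
  push_neg at hcon
  set d : m → ℝ := fun i => -(y i * B.mulVec y i) / (y i * y i) with hd
  have hd0 : ∀ i, 0 ≤ d i := fun i =>
    div_nonneg (neg_nonneg.2 (hcon i)) (mul_self_nonneg _)
  have hker : (B + Matrix.diagonal d).mulVec y = 0 := by
    ext i
    have h1 : d i * y i = -(B.mulVec y i) := by
      rw [hd]
      field_simp [hy i]
    simp [Matrix.add_mulVec, Matrix.mulVec_diagonal, h1]
  have hy0 : y ≠ 0 := fun h => hy (Classical.arbitrary m) (congrFun h _)
  have hdet0 : (B + Matrix.diagonal d).det = 0 :=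
    Matrix.exists_mulVec_eq_zero_iff.mp ⟨y, hy0, hker⟩
  rw [det_add_diagonal] at hdet0
  have hpos : 0 < ∑ s : Finset m, (∏ i ∈ sᶜ, d i) *
      (B.submatrix (fun i : s => (i : m)) (fun i : s => (i : m))).det := by
    apply Finset.sum_pos'
    · intro s _
      rcases s.eq_empty_or_nonempty with rfl | hs
      · haveI : IsEmpty {x // x ∈ (∅ : Finset m)} := ⟨fun x => (Finset.notMem_empty _ x.2)⟩
        rw [Matrix.det_isEmpty]
        exact mul_nonneg (Finset.prod_nonneg fun i _ => hd0 i) zero_le_one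
      · exact mul_nonneg (Finset.prod_nonneg fun i _ => hd0 i) (hB s hs).le
    · refine ⟨Finset.univ, Finset.mem_univ _, ?_⟩
      rw [Finset.compl_univ, Finset.prod_empty, one_mul]
      exact hB Finset.univ Finset.univ_nonempty
  rw [hdet0] at hpos
  exact lt_irrefl 0 hpos
end Aux

theorem stmt_8 {n : ℕ} (A : Matrix (Fin n) (Fin n) ℝ) :
    IsPMatrix A ↔ ∀ x : Fin n → ℝ, x ≠ 0 → ∃ i, 0 < x i * A.mulVec x i := by
  classical
  constructor
  · intro hP x hx
    obtain ⟨i₀, hi₀'⟩ := Function.ne_iff.mp hx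
    have hi₀ : x i₀ ≠ 0 := by simpa using hi₀'
    set S : Finset (Fin n) := Finset.univ.filter (fun i => x i ≠ 0) with hS
    haveI : Nonempty {a // a ∈ S} := ⟨⟨i₀, by simp [hS, hi₀]⟩⟩
    set B := A.submatrix (fun i : S => (i : Fin n)) (fun i : S => (i : Fin n)) with hB
    have hBP : IsPMatrix B := by
      intro s hs
      rw [hB, principal_minor_comp]
      exact hP _ (Finset.map_nonempty.mpr hs)
    set y : {a // a ∈ S} → ℝ := fun i => x i with hy'
    have hy : ∀ i, y i ≠ 0 := fun i => (Finset.mem_filter.mp i.2).2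
    obtain ⟨i, hi⟩ := sign_of_isPMatrix B hBP y hy
    refine ⟨i, ?_⟩
    have hmv : B.mulVec y i = A.mulVec x i := by
      rw [hB, hy']
      simp only [Matrix.mulVec, Matrix.submatrix_apply, dotProduct]
      rw [Finset.sum_coe_sort S (fun j => A i j * x j)]
      refine Finset.sum_subset (Finset.subset_univ S) fun j _ hj => ?_
      have : x j = 0 := by
        by_contra h'
        exact hj (by simp [hS, h'])
      rw [this, mul_zero]
    rw [← hmv]
    exact hi
  · intro h T hT
    apply det_pos_of_sign
    intro y hy
    set x : Fin n → ℝ := fun j => if hj : j ∈ T then y ⟨j, hj⟩ else 0 with hx'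
    have hx : x ≠ 0 := by
      obtain ⟨i, hi⟩ := Function.ne_iff.mp hy
      intro h0
      apply hi
      have := congrFun h0 i.val
      simpa [hx', i.2] using this
    obtain ⟨j, hj⟩ := h x hx
    have hjT : j ∈ T := by
      by_contra hjT
      simp [hx', hjT] at hj
    refine ⟨⟨j, hjT⟩, ?_⟩
    have hmv : (A.submatrix (fun i : T => (i : Fin n)) (fun i : T => (i : Fin n))).mulVec y
        ⟨j, hjT⟩ = A.mulVec x j := by
      simp only [Matrix.mulVec, Matrix.submatrix_apply, dotProduct]
      rw [show (∑ k, A j k * x k) = ∑ k ∈ T, A j k * x k from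
          (Finset.sum_subset (Finset.subset_univ T) fun k _ hk => by simp [hx', hk]).symm,
        ← Finset.sum_coe_sort T (fun k => A j k * x k)]
      refine Finset.sum_congr rfl fun k _ => ?_
      congr 1
      simp [hx', k.2]
    have hxy : x j = y ⟨j, hjT⟩ := by simp [hx', hjT]
    rw [hmv, ← hxy]
    exact hj
end

section
/- If M ∈ ℝ^{n×n} is positive semidefinite, the feasible set fea(M,q) = {x : x ≥ 0, Mx + q ≥ 0} is nonempty, then the set of stationary points {x : ∇f_r(x) = 0} of the merit function f_r equals the solution set sol(M,q), and both are nonempty. -/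
open Matrix

/-- The merit function `f_r(x) = Σᵢ φ_r(xᵢ, (Mx+q)ᵢ)`. -/
noncomputable def fr {n : ℕ} (r : ℝ) (M : Matrix (Fin n) (Fin n) ℝ) (q : Fin n → ℝ)
    (x : Fin n → ℝ) : ℝ :=
  ∑ i, phi r (x i) (M.mulVec x i + q i)

/-- The solution set of the LCP. -/
def solSet {n : ℕ} (M : Matrix (Fin n) (Fin n) ℝ) (q : Fin n → ℝ) : Set (Fin n → ℝ) :=
  {x | (∀ i, 0 ≤ x i) ∧ (∀ i, 0 ≤ M.mulVec x i + q i) ∧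
       ∑ i, x i * (M.mulVec x i + q i) = 0}

/-- The number of nonzero entries of a vector. -/
noncomputable def zeroNorm {n : ℕ} (x : Fin n → ℝ) : ℕ :=
  (Finset.univ.filter (fun i => x i ≠ 0)).card

/-- The feasible set of the LCP. -/
def feaSet {n : ℕ} (M : Matrix (Fin n) (Fin n) ℝ) (q : Fin n → ℝ) : Set (Fin n → ℝ) :=
  {x | (∀ i, 0 ≤ x i) ∧ (∀ i, 0 ≤ M.mulVec x i + q i)}

section Aux
open Real Filter Matrix Finset



lemma hasDerivAt_maxpow (p : ℝ) (hp : 2 ≤ p) (a : ℝ) :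
    HasDerivAt (fun y : ℝ => max y 0 ^ p) (p * max a 0 ^ (p - 1)) a := by
  have hp0 : p ≠ 0 := by positivity
  have hp1 : p - 1 ≠ 0 := by nlinarith
  rcases lt_trichotomy a 0 with h | h | h
  · have hev : (fun y : ℝ => max y 0 ^ p) =ᶠ[nhds a] (fun _ => (0:ℝ) ^ p) := by
      filter_upwards [eventually_lt_nhds h] with y hy
      rw [max_eq_right hy.le]
    have h0 : HasDerivAt (fun _ : ℝ => (0:ℝ) ^ p) 0 a := hasDerivAt_const _ _
    have h2 := h0.congr_of_eventuallyEq hev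
    rw [max_eq_right h.le, Real.zero_rpow hp1, mul_zero]
    exact h2
  · subst h
    rw [hasDerivAt_iff_isLittleO]
    simp only [max_self, Real.zero_rpow hp0, Real.zero_rpow hp1, mul_zero, zero_add, sub_zero,
      smul_eq_mul, zero_mul]
    rw [Asymptotics.isLittleO_iff]
    intro c hc
    have hev : ∀ᶠ y : ℝ in nhds 0, |y - 0| < min 1 c := eventually_abs_sub_lt 0 (by simp [hc])
    filter_upwards [hev] with y hy
    rw [sub_zero] at hy
    rw [Real.norm_eq_abs, Real.norm_eq_abs]
    rcases le_or_gt y 0 with h2 | h2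
    · rw [max_eq_right h2, Real.zero_rpow hp0, abs_zero]; positivity
    · rw [max_eq_left h2.le, abs_of_pos (Real.rpow_pos_of_pos h2 p), abs_of_pos h2]
      have hyy : |y| = y := abs_of_pos h2
      rw [hyy] at hy
      have hy1 : y ≤ 1 := ((lt_min_iff.mp hy).1).le
      have hyc : y ≤ c := ((lt_min_iff.mp hy).2).le
      have e1 : y ^ (p-1) * y = y ^ p := by
        rw [← Real.rpow_add_one h2.ne' (p-1)]; ring_nf
      rw [← e1]
      have e2 : y ^ (p-1) ≤ y ^ (1:ℝ) :=
        Real.rpow_le_rpow_of_exponent_ge h2 hy1 (by linarith)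
      rw [Real.rpow_one] at e2
      have : y ^ (p-1) ≤ c := le_trans e2 hyc
      exact mul_le_mul_of_nonneg_right this h2.le
  · have hev : (fun y : ℝ => max y 0 ^ p) =ᶠ[nhds a] (fun y => y ^ p) := by
      filter_upwards [eventually_gt_nhds h] with y hy
      rw [max_eq_left hy.le]
    have h0 := Real.hasDerivAt_rpow_const (x := a) (p := p) (Or.inl h.ne')
    have h2 := h0.congr_of_eventuallyEq hev
    rw [max_eq_left h.le]
    exact h2



-- product of opposite-part powers vanishes
lemma maxpow_opp_mul (a p q' : ℝ) (hp : p ≠ 0) (hq : q' ≠ 0) :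
    max a 0 ^ p * max (-a) 0 ^ q' = 0 := by
  rcases le_or_gt a 0 with h | h
  · rw [max_eq_right h, Real.zero_rpow hp, zero_mul]
  · rw [max_eq_right (by linarith : -a ≤ 0), Real.zero_rpow hq, mul_zero]

lemma maxpow_nonneg (a p : ℝ) : 0 ≤ max a 0 ^ p := Real.rpow_nonneg (le_max_right a 0) p

lemma neg_mul_maxpow (a p : ℝ) (hp : 0 < p) :
    -(a * max (-a) 0 ^ p) = max (-a) 0 ^ (p + 1) := by
  rcases lt_or_ge a 0 with h | h
  · rw [max_eq_left (by linarith : 0 ≤ -a), Real.rpow_add_one (by intro h'; nlinarith : -a ≠ 0) p]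
    ring
  · rw [max_eq_right (by linarith : -a ≤ 0), Real.zero_rpow hp.ne',
      Real.zero_rpow (by positivity : p + 1 ≠ 0)]
    ring





noncomputable def sIdx {n : ℕ} (r : ℝ) (M : Matrix (Fin n) (Fin n) ℝ) (q : Fin n → ℝ)
    (x : Fin n → ℝ) (i : Fin n) : ℝ :=
  max (x i) 0 ^ (r-1) * max (M.mulVec x i + q i) 0 ^ r - max (-(x i)) 0 ^ (r-1)

noncomputable def tIdx {n : ℕ} (r : ℝ) (M : Matrix (Fin n) (Fin n) ℝ) (q : Fin n → ℝ)
    (x : Fin n → ℝ) (i : Fin n) : ℝ :=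
  max (x i) 0 ^ r * max (M.mulVec x i + q i) 0 ^ (r-1) - max (-(M.mulVec x i + q i)) 0 ^ (r-1)

noncomputable def rowCLM {n : ℕ} (M : Matrix (Fin n) (Fin n) ℝ) (i : Fin n) :
    (Fin n → ℝ) →L[ℝ] ℝ :=
  (ContinuousLinearMap.proj i).comp (M.mulVecLin.toContinuousLinearMap)

noncomputable def frDeriv {n : ℕ} (r : ℝ) (M : Matrix (Fin n) (Fin n) ℝ) (q : Fin n → ℝ)
    (x : Fin n → ℝ) : (Fin n → ℝ) →L[ℝ] ℝ :=
  ∑ i, (sIdx r M q x i • (ContinuousLinearMap.proj i : (Fin n → ℝ) →L[ℝ] ℝ)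
        + tIdx r M q x i • rowCLM M i)

lemma rowCLM_apply {n : ℕ} (M : Matrix (Fin n) (Fin n) ℝ) (i : Fin n) (y : Fin n → ℝ) :
    rowCLM M i y = M.mulVec y i := rfl

lemma hasFDerivAt_fr {n : ℕ} (r : ℝ) (hr : 2 ≤ r) (M : Matrix (Fin n) (Fin n) ℝ)
    (q : Fin n → ℝ) (x : Fin n → ℝ) :
    HasFDerivAt (fr r M q) (frDeriv r M q x) x := by
  have hr0 : (r:ℝ) ≠ 0 := by positivity
  have hproj : ∀ i : Fin n, HasFDerivAt (fun y : Fin n → ℝ => y i)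
      (ContinuousLinearMap.proj i : (Fin n → ℝ) →L[ℝ] ℝ) x :=
    by
      intro i
      have h := (ContinuousLinearMap.proj (R := ℝ) (φ := fun _ : Fin n => ℝ) i).hasFDerivAt (x := x)
      exact h
  have hv : ∀ i : Fin n, HasFDerivAt (fun y : Fin n → ℝ => M.mulVec y i + q i) (rowCLM M i) x :=
    by
      intro i
      have h := ((rowCLM M i).hasFDerivAt (x := x)).add_const (q i)
      exact h
  have key : ∀ i : Fin n, HasFDerivAt (fun y : Fin n → ℝ => phi r (y i) (M.mulVec y i + q i))
      (sIdx r M q x i • (ContinuousLinearMap.proj i : (Fin n → ℝ) →L[ℝ] ℝ)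
        + tIdx r M q x i • rowCLM M i) x := by
    intro i
    have hA : HasFDerivAt (fun y : Fin n → ℝ => max (y i) 0 ^ r)
        ((r * max (x i) 0 ^ (r-1)) • (ContinuousLinearMap.proj i : (Fin n → ℝ) →L[ℝ] ℝ)) x :=
      by have h := (hasDerivAt_maxpow r hr (x i)).comp_hasFDerivAt x (hproj i); exact h
    have hB : HasFDerivAt (fun y : Fin n → ℝ => max (M.mulVec y i + q i) 0 ^ r)
        ((r * max (M.mulVec x i + q i) 0 ^ (r-1)) • rowCLM M i) x :=
      (hasDerivAt_maxpow r hr _).comp_hasFDerivAt x (hv i)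
    have hC : HasFDerivAt (fun y : Fin n → ℝ => max (-(y i)) 0 ^ r)
        ((r * max (-(x i)) 0 ^ (r-1)) • (-(ContinuousLinearMap.proj i : (Fin n → ℝ) →L[ℝ] ℝ))) x :=
      (hasDerivAt_maxpow r hr _).comp_hasFDerivAt x (hproj i).neg
    have hD : HasFDerivAt (fun y : Fin n → ℝ => max (-(M.mulVec y i + q i)) 0 ^ r)
        ((r * max (-(M.mulVec x i + q i)) 0 ^ (r-1)) • (-(rowCLM M i))) x :=
      (hasDerivAt_maxpow r hr _).comp_hasFDerivAt x (hv i).neg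
    have hmul := hA.mul hB
    have hsum := ((hmul.add hC).add hD).const_mul (1/r)
    have : HasFDerivAt (fun y : Fin n → ℝ => phi r (y i) (M.mulVec y i + q i)) _ x := hsum
    refine this.congr_fderiv ?_
    ext h
    simp only [ContinuousLinearMap.add_apply, ContinuousLinearMap.smul_apply,
      ContinuousLinearMap.neg_apply, ContinuousLinearMap.coe_smul', Pi.smul_apply,
      ContinuousLinearMap.proj_apply, smul_eq_mul, sIdx, tIdx]
    field_simp
    ring
  have : HasFDerivAt (fun y : Fin n → ℝ => ∑ i, phi r (y i) (M.mulVec y i + q i))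
      (frDeriv r M q x) x := HasFDerivAt.fun_sum (fun i _ => key i)
  exact this







lemma sum_mul_matrix {n : ℕ} (M : Matrix (Fin n) (Fin n) ℝ) (t h : Fin n → ℝ) :
    ∑ j, h j * (∑ i, t i * M i j) = ∑ i, t i * M.mulVec h i := by
  simp only [Matrix.mulVec, dotProduct, Finset.mul_sum]
  rw [Finset.sum_comm]
  apply Finset.sum_congr rfl; intros; apply Finset.sum_congr rfl; intros; ring

lemma frDeriv_apply {n : ℕ} (r : ℝ) (M : Matrix (Fin n) (Fin n) ℝ) (q : Fin n → ℝ)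
    (x h : Fin n → ℝ) :
    frDeriv r M q x h = ∑ j, (sIdx r M q x j + ∑ i, tIdx r M q x i * M i j) * h j := by
  have e1 : frDeriv r M q x h
      = ∑ i, (sIdx r M q x i * h i + tIdx r M q x i * M.mulVec h i) := by
    simp [frDeriv, ContinuousLinearMap.sum_apply, ContinuousLinearMap.add_apply,
      ContinuousLinearMap.smul_apply, ContinuousLinearMap.proj_apply, smul_eq_mul]
    rfl
  rw [e1, Finset.sum_add_distrib, ← sum_mul_matrix M (tIdx r M q x) h,
    ← Finset.sum_add_distrib]
  apply Finset.sum_congr rfl; intros; ring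

lemma stationary_iff {n : ℕ} (r : ℝ) (M : Matrix (Fin n) (Fin n) ℝ) (q : Fin n → ℝ)
    (x : Fin n → ℝ) :
    frDeriv r M q x = 0 ↔ ∀ j, sIdx r M q x j + ∑ i, tIdx r M q x i * M i j = 0 := by
  constructor
  · intro h j
    have := ContinuousLinearMap.ext_iff.mp h (Pi.single j 1)
    rw [frDeriv_apply] at this
    simpa [Pi.single_apply, mul_ite, Finset.sum_ite_eq'] using this
  · intro h
    ext y
    rw [frDeriv_apply]
    simp [h]









lemma sol_of_stationary {n : ℕ} (r : ℝ) (hr : 2 ≤ r) (M : Matrix (Fin n) (Fin n) ℝ)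
    (q : Fin n → ℝ) (hpsd : ∀ x : Fin n → ℝ, 0 ≤ ∑ i, x i * M.mulVec x i)
    (xb : Fin n → ℝ) (hxb : xb ∈ feaSet M q) (x : Fin n → ℝ)
    (hst : ∀ j, sIdx r M q x j + ∑ i, tIdx r M q x i * M i j = 0) :
    x ∈ solSet M q := by
  have hr0 : r ≠ 0 := by positivity
  have hr1' : (0:ℝ) < r - 1 := by linarith
  have hr1 : r - 1 ≠ 0 := hr1'.ne'
  set v : Fin n → ℝ := fun i => M.mulVec x i + q i with hv
  set s : Fin n → ℝ := sIdx r M q x with hs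
  set t : Fin n → ℝ := tIdx r M q x with ht
  -- decomposition of s j * t j
  have edec : ∀ j, s j * t j =
      (max (x j) 0 ^ (r-1) * max (x j) 0 ^ r) * (max (v j) 0 ^ r * max (v j) 0 ^ (r-1))
        + max (-(x j)) 0 ^ (r-1) * max (-(v j)) 0 ^ (r-1) := by
    intro j
    have h1 : max (v j) 0 ^ r * max (-(v j)) 0 ^ (r-1) = 0 := maxpow_opp_mul _ _ _ hr0 hr1
    have h2 : max (x j) 0 ^ r * max (-(x j)) 0 ^ (r-1) = 0 := maxpow_opp_mul _ _ _ hr0 hr1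
    simp only [hs, ht, sIdx, tIdx, ← hv]
    linear_combination (-(max (x j) 0 ^ (r-1))) * h1 + (-(max (v j) 0 ^ (r-1))) * h2
  have hst_nonneg : ∀ j, 0 ≤ s j * t j := by
    intro j
    rw [edec j]
    have := maxpow_nonneg (x j) (r-1); have := maxpow_nonneg (x j) r
    have := maxpow_nonneg (v j) (r-1); have := maxpow_nonneg (v j) r
    have := maxpow_nonneg (-(x j)) (r-1); have := maxpow_nonneg (-(v j)) (r-1)
    positivity
  -- Step 1 : s j * t j = 0 for all j
  have h0 : (∑ j, s j * t j) + (∑ i, t i * M.mulVec t i) = 0 := by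
    have e1 : ∑ j, t j * (s j + ∑ i, t i * M i j) = 0 :=
      Finset.sum_eq_zero (fun j _ => by rw [hst j, mul_zero])
    have e2 : ∑ j, t j * (s j + ∑ i, t i * M i j)
        = (∑ j, s j * t j) + ∑ j, t j * (∑ i, t i * M i j) := by
      rw [← Finset.sum_add_distrib]
      apply Finset.sum_congr rfl; intros; ring
    rw [e2, sum_mul_matrix] at e1
    exact e1
  have key1 : ∀ j, s j * t j = 0 := by
    have hsum : ∑ j, s j * t j = 0 := by
      have := hpsd t
      have h1 : 0 ≤ ∑ j, s j * t j := Finset.sum_nonneg (fun j _ => hst_nonneg j)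
      linarith
    intro j
    exact (Finset.sum_eq_zero_iff_of_nonneg (fun j _ => hst_nonneg j)).mp hsum j (Finset.mem_univ j)
  -- Step 2 : componentwise complementarity of positive/negative parts
  have hAB : ∀ j, max (x j) 0 * max (v j) 0 = 0 := by
    intro j
    by_contra hne
    rcases mul_ne_zero_iff.mp hne with ⟨ha, hb⟩
    have ha' : 0 < max (x j) 0 := (le_max_right _ _).lt_of_ne (Ne.symm ha)
    have hb' : 0 < max (v j) 0 := (le_max_right _ _).lt_of_ne (Ne.symm hb)
    have hpos : 0 < (max (x j) 0 ^ (r-1) * max (x j) 0 ^ r) * (max (v j) 0 ^ r * max (v j) 0 ^ (r-1)) := by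
      have := Real.rpow_pos_of_pos ha' (r-1); have := Real.rpow_pos_of_pos ha' r
      have := Real.rpow_pos_of_pos hb' (r-1); have := Real.rpow_pos_of_pos hb' r
      positivity
    have h2 : 0 ≤ max (-(x j)) 0 ^ (r-1) * max (-(v j)) 0 ^ (r-1) := by
      have := maxpow_nonneg (-(x j)) (r-1); have := maxpow_nonneg (-(v j)) (r-1)
      positivity
    have := key1 j
    rw [edec j] at this
    linarith
  have hA'B' : ∀ j, max (-(x j)) 0 ^ (r-1) * max (-(v j)) 0 ^ (r-1) = 0 := by
    intro j
    have h2 : 0 ≤ (max (x j) 0 ^ (r-1) * max (x j) 0 ^ r) * (max (v j) 0 ^ r * max (v j) 0 ^ (r-1)) := by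
      have := maxpow_nonneg (x j) (r-1); have := maxpow_nonneg (x j) r
      have := maxpow_nonneg (v j) (r-1); have := maxpow_nonneg (v j) r
      positivity
    have h3 : 0 ≤ max (-(x j)) 0 ^ (r-1) * max (-(v j)) 0 ^ (r-1) := by
      have := maxpow_nonneg (-(x j)) (r-1); have := maxpow_nonneg (-(v j)) (r-1)
      positivity
    have := key1 j
    rw [edec j] at this
    linarith
  -- formulas for s and t
  have hsj : ∀ j, s j = -(max (-(x j)) 0 ^ (r-1)) := by
    intro j
    have : max (x j) 0 ^ (r-1) * max (v j) 0 ^ r = 0 := by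
      rcases mul_eq_zero.mp (hAB j) with h | h
      · rw [h, Real.zero_rpow hr1, zero_mul]
      · rw [h, Real.zero_rpow hr0, mul_zero]
    simp only [hs, sIdx, ← hv]
    rw [this]; ring
  have htj : ∀ j, t j = -(max (-(v j)) 0 ^ (r-1)) := by
    intro j
    have : max (x j) 0 ^ r * max (v j) 0 ^ (r-1) = 0 := by
      rcases mul_eq_zero.mp (hAB j) with h | h
      · rw [h, Real.zero_rpow hr0, zero_mul]
      · rw [h, Real.zero_rpow hr1, mul_zero]
    simp only [ht, tIdx, ← hv]
    rw [this]; ring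
  -- Step 3 : test with feasible point
  set vb : Fin n → ℝ := fun i => M.mulVec xb i + q i with hvb
  have h3 : (∑ j, xb j * s j) + (∑ i, t i * vb i)
      = (∑ j, x j * s j) + (∑ i, t i * v i) := by
    have e1 : ∑ j, (xb j - x j) * (s j + ∑ i, t i * M i j) = 0 :=
      Finset.sum_eq_zero (fun j _ => by rw [hst j, mul_zero])
    have e2 : ∑ j, (xb j - x j) * (s j + ∑ i, t i * M i j)
        = ((∑ j, xb j * s j) - ∑ j, x j * s j)
          + ((∑ j, xb j * (∑ i, t i * M i j)) - ∑ j, x j * (∑ i, t i * M i j)) := by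
      rw [← Finset.sum_sub_distrib, ← Finset.sum_sub_distrib, ← Finset.sum_add_distrib]
      apply Finset.sum_congr rfl; intros; ring
    rw [e2, sum_mul_matrix, sum_mul_matrix] at e1
    have e3 : (∑ i, t i * M.mulVec xb i) - (∑ i, t i * M.mulVec x i)
        = (∑ i, t i * vb i) - (∑ i, t i * v i) := by
      rw [← Finset.sum_sub_distrib, ← Finset.sum_sub_distrib]
      apply Finset.sum_congr rfl; intros; simp only [hvb, ← hv]; ring
    linarith
  have hxs : ∑ j, x j * s j = ∑ j, max (-(x j)) 0 ^ r := by
    apply Finset.sum_congr rfl; intro j _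
    rw [hsj j]
    have := neg_mul_maxpow (x j) (r-1) hr1'
    rw [sub_add_cancel] at this
    linarith
  have htv : ∑ i, t i * v i = ∑ i, max (-(v i)) 0 ^ r := by
    apply Finset.sum_congr rfl; intro i _
    rw [htj i]
    have := neg_mul_maxpow (v i) (r-1) hr1'
    rw [sub_add_cancel] at this
    linarith
  have hxbs : ∑ j, xb j * s j ≤ 0 := by
    apply Finset.sum_nonpos; intro j _
    rw [hsj j]
    have h1 := maxpow_nonneg (-(x j)) (r-1)
    have h2 := hxb.1 j
    nlinarith
  have htvb : ∑ i, t i * vb i ≤ 0 := by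
    apply Finset.sum_nonpos; intro i _
    rw [htj i]
    have h1 := maxpow_nonneg (-(v i)) (r-1)
    have h2 : 0 ≤ vb i := hxb.2 i
    nlinarith
  have hxsum : ∑ j, max (-(x j)) 0 ^ r = 0 := by
    have h1 : 0 ≤ ∑ j, max (-(x j)) 0 ^ r := Finset.sum_nonneg (fun j _ => maxpow_nonneg _ _)
    have h2 : 0 ≤ ∑ i, max (-(v i)) 0 ^ r := Finset.sum_nonneg (fun i _ => maxpow_nonneg _ _)
    rw [hxs, htv] at h3
    linarith
  have hvsum : ∑ i, max (-(v i)) 0 ^ r = 0 := by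
    have h1 : 0 ≤ ∑ j, max (-(x j)) 0 ^ r := Finset.sum_nonneg (fun j _ => maxpow_nonneg _ _)
    have h2 : 0 ≤ ∑ i, max (-(v i)) 0 ^ r := Finset.sum_nonneg (fun i _ => maxpow_nonneg _ _)
    rw [hxs, htv] at h3
    linarith
  have hxnn : ∀ j, 0 ≤ x j := by
    intro j
    have := (Finset.sum_eq_zero_iff_of_nonneg (fun j _ => maxpow_nonneg (-(x j)) r)).mp hxsum j
      (Finset.mem_univ j)
    by_contra hneg
    push_neg at hneg
    have h1 : 0 < max (-(x j)) 0 := by rw [max_eq_left (by linarith)]; linarith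
    exact absurd this (Real.rpow_pos_of_pos h1 r).ne'
  have hvnn : ∀ i, 0 ≤ v i := by
    intro i
    have := (Finset.sum_eq_zero_iff_of_nonneg (fun i _ => maxpow_nonneg (-(v i)) r)).mp hvsum i
      (Finset.mem_univ i)
    by_contra hneg
    push_neg at hneg
    have h1 : 0 < max (-(v i)) 0 := by rw [max_eq_left (by linarith)]; linarith
    exact absurd this (Real.rpow_pos_of_pos h1 r).ne'
  refine ⟨hxnn, hvnn, ?_⟩
  apply Finset.sum_eq_zero
  intro i _
  have := hAB i
  rwa [max_eq_left (hxnn i), max_eq_left (hvnn i)] at this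



lemma fixedpt_pointwise {a b γ : ℝ} (hγ : 0 < γ) (h : max (a - γ * b) 0 = a) :
    0 ≤ a ∧ 0 ≤ b ∧ a * b = 0 := by
  have ha : 0 ≤ a := h ▸ le_max_right _ _
  have hb : 0 ≤ b := by
    by_contra hb
    push_neg at hb
    have h1 : a - γ * b > a := by nlinarith
    have h2 : max (a - γ * b) 0 ≥ a - γ * b := le_max_left _ _
    linarith
  refine ⟨ha, hb, ?_⟩
  rcases eq_or_lt_of_le ha with h1 | h1
  · rw [← h1]; ring
  · have h2 : a - γ * b ≤ a := by nlinarith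
    rcases le_or_gt (a - γ * b) 0 with h3 | h3
    · rw [max_eq_right h3] at h
      linarith
    · rw [max_eq_left h3.le] at h
      have : γ * b = 0 := by linarith
      rcases mul_eq_zero.mp this with h4 | h4
      · exact absurd h4 hγ.ne'
      · rw [h4]; ring

lemma exists_sol_posdef {n : ℕ} (A : Matrix (Fin n) (Fin n) ℝ) (q : Fin n → ℝ) (ε : ℝ)
    (hε : 0 < ε) (hε1 : ε ≤ 1)
    (hpd : ∀ z : Fin n → ℝ, ε * (∑ i, z i * z i) ≤ ∑ i, z i * A.mulVec z i) :
    ∃ x : Fin n → ℝ, (∀ i, 0 ≤ x i) ∧ (∀ i, 0 ≤ A.mulVec x i + q i) ∧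
      (∀ i, x i * (A.mulVec x i + q i) = 0) := by
  classical
  set L2 : ℝ := 1 + ∑ i, ∑ j, (A i j)^2 with hL2
  have hL2pos : (1:ℝ) ≤ L2 := by
    have : 0 ≤ ∑ i, ∑ j, (A i j)^2 :=
      Finset.sum_nonneg fun i _ => Finset.sum_nonneg fun j _ => sq_nonneg _
    simp [hL2]; linarith
  have hL2pos' : (0:ℝ) < L2 := by linarith
  set γ : ℝ := ε / L2 with hγdef
  have hγ : 0 < γ := div_pos hε hL2pos'
  set F : (Fin n → ℝ) → (Fin n → ℝ) := fun y i => max (y i - γ * (A.mulVec y i + q i)) 0 with hF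
  -- the key quadratic contraction estimate
  have key : ∀ y z : Fin n → ℝ,
      ∑ i, (F y i - F z i)^2 ≤ (1 - ε^2/L2) * ∑ i, (y i - z i)^2 := by
    intro y z
    set d : Fin n → ℝ := fun i => y i - z i with hd
    have step1 : ∑ i, (F y i - F z i)^2 ≤ ∑ i, (d i - γ * A.mulVec d i)^2 := by
      apply Finset.sum_le_sum
      intro i _
      have h1 : |F y i - F z i| ≤ |(y i - γ * (A.mulVec y i + q i)) - (z i - γ * (A.mulVec z i + q i))| :=
        abs_max_sub_max_le_abs _ _ _
      have e1 : (y i - γ * (A.mulVec y i + q i)) - (z i - γ * (A.mulVec z i + q i))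
          = d i - γ * A.mulVec d i := by
        have : A.mulVec d i = A.mulVec y i - A.mulVec z i := by
          rw [hd]
          have : (fun i => y i - z i) = y - z := rfl
          rw [this, Matrix.mulVec_sub]
          rfl
        rw [this, hd]
        ring
      rw [e1] at h1
      calc (F y i - F z i)^2 = |F y i - F z i|^2 := (sq_abs _).symm
        _ ≤ |d i - γ * A.mulVec d i|^2 := by
            apply pow_le_pow_left₀ (abs_nonneg _) h1
        _ = (d i - γ * A.mulVec d i)^2 := sq_abs _
    have expand : ∑ i, (d i - γ * A.mulVec d i)^2
        = ∑ i, d i^2 - 2*γ*(∑ i, d i * A.mulVec d i) + γ^2 * ∑ i, (A.mulVec d i)^2 := by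
      rw [Finset.mul_sum, Finset.mul_sum, ← Finset.sum_sub_distrib, ← Finset.sum_add_distrib]
      apply Finset.sum_congr rfl; intros; ring
    have cs : ∑ i, (A.mulVec d i)^2 ≤ (L2 - 1) * ∑ i, d i^2 := by
      have e2 : ∀ i : Fin n, (A.mulVec d i)^2 ≤ (∑ j, (A i j)^2) * ∑ j, d j^2 := by
        intro i
        have : A.mulVec d i = ∑ j, A i j * d j := by
          simp [Matrix.mulVec, dotProduct]
        rw [this]
        exact Finset.sum_mul_sq_le_sq_mul_sq _ _ _
      calc ∑ i, (A.mulVec d i)^2 ≤ ∑ i, (∑ j, (A i j)^2) * ∑ j, d j^2 :=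
            Finset.sum_le_sum fun i _ => e2 i
        _ = (∑ i, ∑ j, (A i j)^2) * ∑ j, d j^2 := by rw [Finset.sum_mul]
        _ = (L2 - 1) * ∑ j, d j^2 := by
            rw [show L2 - 1 = ∑ i, ∑ j, (A i j)^2 by rw [hL2]; ring]
    have mono : ε * ∑ i, d i^2 ≤ ∑ i, d i * A.mulVec d i := by
      have := hpd d
      have e3 : ∑ i, d i * d i = ∑ i, d i^2 := by
        apply Finset.sum_congr rfl; intros; ring
      linarith [e3 ▸ this]
    have hdnn : 0 ≤ ∑ i, d i^2 := Finset.sum_nonneg fun i _ => sq_nonneg _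
    calc ∑ i, (F y i - F z i)^2 ≤ ∑ i, (d i - γ * A.mulVec d i)^2 := step1
      _ = ∑ i, d i^2 - 2*γ*(∑ i, d i * A.mulVec d i) + γ^2 * ∑ i, (A.mulVec d i)^2 := expand
      _ ≤ ∑ i, d i^2 - 2*γ*(ε * ∑ i, d i^2) + γ^2 * ((L2-1) * ∑ i, d i^2) := by
          have h4 : γ^2 * (∑ i, (A.mulVec d i)^2) ≤ γ^2 * ((L2-1) * ∑ i, d i^2) :=
            mul_le_mul_of_nonneg_left cs (sq_nonneg _)
          have h5 : 2*γ*(ε * ∑ i, d i^2) ≤ 2*γ*(∑ i, d i * A.mulVec d i) :=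
            mul_le_mul_of_nonneg_left mono (by positivity)
          linarith
      _ = (1 - 2*γ*ε + γ^2*(L2-1)) * ∑ i, d i^2 := by ring
      _ ≤ (1 - ε^2/L2) * ∑ i, d i^2 := by
          apply mul_le_mul_of_nonneg_right _ hdnn
          rw [hγdef]
          have h6 : (ε/L2)^2 * (L2 - 1) ≤ (ε/L2)^2 * L2 := by
            apply mul_le_mul_of_nonneg_left (by linarith) (sq_nonneg _)
          have h7 : (ε/L2)^2 * L2 = ε^2/L2 := by field_simp
          have h8 : (ε/L2) * ε = ε^2/L2 := by field_simp
          linarith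
  -- pass to EuclideanSpace and apply the Banach fixed point theorem
  set K2 : ℝ := 1 - ε^2/L2 with hK2
  have hεsq : ε^2/L2 ≤ 1 := by
    rw [div_le_one hL2pos']
    nlinarith
  have hK2nn : 0 ≤ K2 := by rw [hK2]; linarith
  have hK2lt : K2 < 1 := by
    have : 0 < ε^2/L2 := by positivity
    rw [hK2]; linarith
  set K : NNReal := Real.toNNReal (Real.sqrt K2) with hKdef
  have hK1 : (K : ℝ) = Real.sqrt K2 := Real.coe_toNNReal _ (Real.sqrt_nonneg _)
  have hKlt : K < 1 := by
    rw [← NNReal.coe_lt_coe, hK1, NNReal.coe_one]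
    calc Real.sqrt K2 < Real.sqrt 1 := Real.sqrt_lt_sqrt hK2nn hK2lt
      _ = 1 := Real.sqrt_one
  set G : EuclideanSpace ℝ (Fin n) → EuclideanSpace ℝ (Fin n) := fun y => WithLp.toLp 2 (F y : Fin n → ℝ) with hG
  have edist : ∀ w1 w2 : EuclideanSpace ℝ (Fin n),
      dist w1 w2 = Real.sqrt (∑ i, (w1 i - w2 i)^2) := by
    intro w1 w2
    rw [EuclideanSpace.dist_eq]
    congr 1
    apply Finset.sum_congr rfl; intros
    rw [Real.dist_eq, sq_abs]
  have hlip : LipschitzWith K G := by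
    apply LipschitzWith.of_dist_le_mul
    intro y z
    rw [edist, edist, hK1]
    have h1 : Real.sqrt (∑ i, (G y i - G z i)^2) ≤ Real.sqrt (K2 * ∑ i, (y i - z i)^2) :=
      Real.sqrt_le_sqrt (key y z)
    calc Real.sqrt (∑ i, (G y i - G z i)^2) ≤ Real.sqrt (K2 * ∑ i, (y i - z i)^2) := h1
      _ = Real.sqrt K2 * Real.sqrt (∑ i, (y i - z i)^2) := Real.sqrt_mul hK2nn _
  have hcw : ContractingWith K G := ⟨hKlt, hlip⟩
  let x : EuclideanSpace ℝ (Fin n) := ContractingWith.fixedPoint G hcw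
  have hfix : G x = x := hcw.fixedPoint_isFixedPt
  have hfix' : ∀ i, max (x i - γ * (A.mulVec x i + q i)) 0 = x i := by
    intro i
    exact congrArg (fun w : EuclideanSpace ℝ (Fin n) => w i) hfix
  refine ⟨x, fun i => (fixedpt_pointwise hγ (hfix' i)).1,
    fun i => (fixedpt_pointwise hγ (hfix' i)).2.1,
    fun i => (fixedpt_pointwise hγ (hfix' i)).2.2⟩

section Cone


variable {ι : Type*} [Fintype ι] {E : Type*} [NormedAddCommGroup E] [NormedSpace ℝ E]

/-- cone with support in `s` -/
def coneOf (v : ι → E) (s : Finset ι) : Set E :=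
  {y | ∃ t : ι → ℝ, (∀ i, 0 ≤ t i) ∧ (∀ i ∉ s, t i = 0) ∧ y = ∑ i ∈ s, t i • v i}

lemma coneOf_closed_of_li (v : ι → E) (s : Finset ι)
    (hli : LinearIndependent ℝ (fun i : ↥s => v i)) : IsClosed (coneOf v s) := by
  classical
  let T : (↥s → ℝ) →ₗ[ℝ] E :=
    { toFun := fun c => ∑ i : ↥s, c i • v (i : ι)
      map_add' := by
        intro a b
        rw [← Finset.sum_add_distrib]
        apply Finset.sum_congr rfl; intros; rw [Pi.add_apply, add_smul]
      map_smul' := by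
        intro m a
        rw [RingHom.id_apply, Finset.smul_sum]
        apply Finset.sum_congr rfl; intros; rw [Pi.smul_apply, smul_smul, smul_eq_mul] }
  have hker : LinearMap.ker T = ⊥ := by
    rw [LinearMap.ker_eq_bot']
    intro c hc
    funext i
    exact Fintype.linearIndependent_iff.mp hli c hc i
  have hemb := LinearMap.isClosedEmbedding_of_injective (f := T) hker
  have himg : coneOf v s = T '' {c : ↥s → ℝ | ∀ i, 0 ≤ c i} := by
    ext y
    constructor
    · rintro ⟨t, ht0, hts, rfl⟩
      refine ⟨fun i => t i, fun i => ht0 i, ?_⟩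
      show ∑ i : ↥s, t i • v (i : ι) = _
      rw [← Finset.sum_attach s (fun i => t i • v i)]
      rfl
    · rintro ⟨c, hc, rfl⟩
      refine ⟨fun i => if h : i ∈ s then c ⟨i, h⟩ else 0, ?_, ?_, ?_⟩
      · intro i
        by_cases h : i ∈ s
        · simpa [h] using hc ⟨i, h⟩
        · simp [h]
      · intro i hi; simp [hi]
      · show _ = ∑ i ∈ s, (if h : i ∈ s then c ⟨i, h⟩ else 0) • v i
        rw [← Finset.sum_attach s (fun i => (if h : i ∈ s then c ⟨i, h⟩ else 0) • v i)]
        show ∑ i : ↥s, c i • v (i : ι) = _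
        apply Finset.sum_congr rfl
        intro i _
        rcases i with ⟨i, hi⟩
        simp [hi]
  rw [himg]
  apply hemb.isClosedMap
  have : {c : ↥s → ℝ | ∀ i, 0 ≤ c i} = ⋂ i : ↥s, {c : ↥s → ℝ | 0 ≤ c i} := by
    ext c; simp [Set.mem_iInter]
  rw [this]
  exact isClosed_iInter fun i => isClosed_le continuous_const (continuous_apply i)

lemma coneOf_reduce (v : ι → E) (s : Finset ι) :
    ∀ y ∈ coneOf v s, ∃ s' : Finset ι, s' ⊆ s ∧
      LinearIndependent ℝ (fun i : ↥s' => v i) ∧ y ∈ coneOf v s' := by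
  classical
  induction s using Finset.strongInductionOn with
  | _ s ih =>
    intro y hy
    by_cases hli : LinearIndependent ℝ (fun i : ↥s => v i)
    · exact ⟨s, subset_rfl, hli, hy⟩
    obtain ⟨t, ht0, hts, hysum⟩ := hy
    obtain ⟨g, hgsum, i1, hgi1⟩ := Fintype.not_linearIndependent_iff.mp hli
    set gg : ι → ℝ := fun i => if h : i ∈ s then g ⟨i, h⟩ else 0 with hgg
    have hggsum : ∑ i ∈ s, gg i • v i = 0 := by
      rw [← Finset.sum_attach s (fun i => gg i • v i)]
      rw [← hgsum]
      apply Finset.sum_congr rfl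
      intro i _
      rcases i with ⟨i, hi⟩
      simp [hgg, hi]
    have hggi1 : gg (i1 : ι) ≠ 0 := by
      rcases i1 with ⟨i, hi⟩
      simpa [hgg, hi] using hgi1
    -- make sure some coefficient is positive
    have hmain : ∃ g' : ι → ℝ, (∑ i ∈ s, g' i • v i = 0) ∧ (∀ i ∉ s, g' i = 0)
        ∧ ∃ i ∈ s, 0 < g' i := by
      rcases lt_or_gt_of_ne hggi1 with hneg | hpos
      · refine ⟨-gg, by simpa using hggsum, fun i hi => by simp [hgg, hi], (i1 : ι), i1.2, by
          simpa using hneg⟩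
      · exact ⟨gg, hggsum, fun i hi => by simp [hgg, hi], (i1 : ι), i1.2, hpos⟩
    obtain ⟨g', hg'sum, hg'0, hg'pos⟩ := hmain
    set P : Finset ι := s.filter (fun i => 0 < g' i) with hP
    have hPne : P.Nonempty := by
      obtain ⟨i, hi, hpos⟩ := hg'pos
      exact ⟨i, by simp [hP, hi, hpos]⟩
    obtain ⟨i0, hi0P, hi0min⟩ := Finset.exists_min_image P (fun i => t i / g' i) hPne
    have hi0s : i0 ∈ s := (Finset.mem_filter.mp hi0P).1
    have hgi0 : 0 < g' i0 := (Finset.mem_filter.mp hi0P).2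
    set lam : ℝ := t i0 / g' i0 with hlam
    have hlam0 : 0 ≤ lam := div_nonneg (ht0 i0) hgi0.le
    set t' : ι → ℝ := fun i => t i - lam * g' i with ht'
    have ht'0 : ∀ i, 0 ≤ t' i := by
      intro i
      by_cases hi : i ∈ s
      · by_cases hpos : 0 < g' i
        · have hiP : i ∈ P := by simp [hP, hi, hpos]
          have := hi0min i hiP
          have : lam * g' i ≤ t i := by
            rw [hlam]
            rw [div_le_div_iff₀ hgi0 hpos] at this
            calc t i0 / g' i0 * g' i = t i0 * g' i / g' i0 := by ring
              _ ≤ t i * g' i0 / g' i0 := (div_le_div_iff_of_pos_right hgi0).mpr this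
              _ = t i := by field_simp
          simp only [ht']; linarith
        · push_neg at hpos
          have : 0 ≤ -(lam * g' i) := by nlinarith
          have := ht0 i
          simp only [ht']; linarith
      · simp only [ht', hts i hi, hg'0 i hi]; norm_num
    have ht'i0 : t' i0 = 0 := by
      have hne := hgi0.ne'
      simp only [ht', hlam]
      field_simp
      ring
    have ht'supp : ∀ i ∉ s.erase i0, t' i = 0 := by
      intro i hi
      by_cases hi' : i ∈ s
      · have : i = i0 := by
          by_contra hne
          exact hi (Finset.mem_erase.mpr ⟨hne, hi'⟩)
        rw [this]; exact ht'i0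
      · simp only [ht', hts i hi', hg'0 i hi']; ring
    have hy' : y ∈ coneOf v (s.erase i0) := by
      refine ⟨t', ht'0, ht'supp, ?_⟩
      have e1 : ∑ i ∈ s, t' i • v i = ∑ i ∈ s, t i • v i - lam • ∑ i ∈ s, g' i • v i := by
        rw [Finset.smul_sum, ← Finset.sum_sub_distrib]
        apply Finset.sum_congr rfl
        intros; simp only [ht']; rw [sub_smul, smul_smul]
      have e2 : ∑ i ∈ s.erase i0, t' i • v i = ∑ i ∈ s, t' i • v i := by
        apply Finset.sum_subset (Finset.erase_subset _ _)
        intro i hi hni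
        have : i = i0 := by
          by_contra hne
          exact hni (Finset.mem_erase.mpr ⟨hne, hi⟩)
        rw [this, ht'i0, zero_smul]
      rw [e2, e1, hg'sum, smul_zero, sub_zero, hysum]
    obtain ⟨s', hs'sub, hs'li, hys'⟩ := ih (s.erase i0) (Finset.erase_ssubset hi0s) y hy'
    exact ⟨s', hs'sub.trans (Finset.erase_subset _ _), hs'li, hys'⟩

theorem isClosed_cone (v : ι → E) :
    IsClosed {y : E | ∃ t : ι → ℝ, (∀ i, 0 ≤ t i) ∧ y = ∑ i, t i • v i} := by
  classical
  have hmain : {y : E | ∃ t : ι → ℝ, (∀ i, 0 ≤ t i) ∧ y = ∑ i, t i • v i}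
      = ⋃ s ∈ {s : Finset ι | LinearIndependent ℝ (fun i : ↥s => v i)}, coneOf v s := by
    ext y
    simp only [Set.mem_setOf_eq, Set.mem_iUnion]
    constructor
    · rintro ⟨t, ht0, rfl⟩
      have : (∑ i, t i • v i) ∈ coneOf v Finset.univ :=
        ⟨t, ht0, fun i hi => absurd (Finset.mem_univ i) hi, rfl⟩
      obtain ⟨s', _, hli, hys'⟩ := coneOf_reduce v Finset.univ _ this
      exact ⟨s', hli, hys'⟩
    · rintro ⟨s, hli, t, ht0, hts, rfl⟩
      refine ⟨t, ht0, ?_⟩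
      rw [← Finset.sum_subset (Finset.subset_univ s)]
      intro i _ hi
      rw [hts i hi, zero_smul]
  rw [hmain]
  exact Set.Finite.isClosed_biUnion (Set.toFinite _)
    (fun s hs => coneOf_closed_of_li v s hs)

end Cone






set_option maxHeartbeats 1000000 in
lemma sol_nonempty {n : ℕ} (M : Matrix (Fin n) (Fin n) ℝ) (q : Fin n → ℝ)
    (hpsd : ∀ x : Fin n → ℝ, 0 ≤ ∑ i, x i * M.mulVec x i)
    (hfea : (feaSet M q).Nonempty) : (solSet M q).Nonempty := by
  classical
  obtain ⟨xb, hxb1, hxb2⟩ := hfea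
  set ε : ℕ → ℝ := fun k => 1 / (k + 1) with hεdef
  have hε_pos : ∀ k, 0 < ε k := fun k => by positivity
  have hε_le1 : ∀ k, ε k ≤ 1 := by
    intro k
    rw [hεdef]
    rw [div_le_one (by positivity)]
    simp
  have hε_to0 : Tendsto ε atTop (nhds 0) := tendsto_one_div_add_atTop_nhds_zero_nat
  set A : ℕ → Matrix (Fin n) (Fin n) ℝ := fun k => M + ε k • (1 : Matrix (Fin n) (Fin n) ℝ)
    with hAdef
  have hAmul : ∀ k (z : Fin n → ℝ) i, (A k).mulVec z i = M.mulVec z i + ε k * z i := by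
    intro k z i
    rw [hAdef]
    simp only [Matrix.add_mulVec, Matrix.smul_mulVec, Matrix.one_mulVec,
      Pi.add_apply, Pi.smul_apply, smul_eq_mul]
  have hpd : ∀ k (z : Fin n → ℝ), ε k * (∑ i, z i * z i) ≤ ∑ i, z i * (A k).mulVec z i := by
    intro k z
    have e1 : ∑ i, z i * (A k).mulVec z i
        = (∑ i, z i * M.mulVec z i) + ε k * ∑ i, z i * z i := by
      rw [Finset.mul_sum, ← Finset.sum_add_distrib]
      apply Finset.sum_congr rfl
      intro i _
      rw [hAmul k z i]; ring
    rw [e1]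
    have := hpsd z
    linarith
  have hex : ∀ k : ℕ, ∃ x : Fin n → ℝ, (∀ i, 0 ≤ x i) ∧ (∀ i, 0 ≤ (A k).mulVec x i + q i) ∧
      (∀ i, x i * ((A k).mulVec x i + q i) = 0) :=
    fun k => exists_sol_posdef (A k) q (ε k) (hε_pos k) (hε_le1 k) (hpd k)
  choose x hx1 hx2 hx3 using hex
  set w : ℕ → Fin n → ℝ := fun k i => (A k).mulVec (x k) i + q i with hwdef
  set vb : Fin n → ℝ := fun i => M.mulVec xb i + q i with hvbdef
  set C : ℝ := ∑ i, xb i * vb i with hCdef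
  have hC0 : 0 ≤ C := Finset.sum_nonneg fun i _ => mul_nonneg (hxb1 i) (hxb2 i)
  set B2 : ℝ := ∑ i, xb i ^ 2 with hB2def
  have hB20 : 0 ≤ B2 := Finset.sum_nonneg fun i _ => sq_nonneg _
  set N2 : ℕ → ℝ := fun k => ∑ i, (x k i - xb i)^2 with hN2def
  have hN20 : ∀ k, 0 ≤ N2 k := fun k => Finset.sum_nonneg fun i _ => sq_nonneg _
  -- the key bound
  have hbound : ∀ k, ε k * N2 k ≤ C + ε k * (Real.sqrt B2 * Real.sqrt (N2 k)) := by
    intro k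
    set d : Fin n → ℝ := fun i => x k i - xb i with hddef
    have h0 := hpsd d
    have hMd : ∀ i, M.mulVec d i = w k i - ε k * x k i - vb i := by
      intro i
      have e1 : M.mulVec d i = M.mulVec (x k) i - M.mulVec xb i := by
        have : d = x k - xb := rfl
        rw [this, Matrix.mulVec_sub]
        rfl
      have e2 : M.mulVec (x k) i = w k i - ε k * x k i - q i := by
        rw [hwdef]
        simp only
        rw [hAmul k (x k) i]
        ring
      rw [e1, e2, hvbdef]
      ring
    have e3 : ∑ i, d i * M.mulVec d i
        = (∑ i, d i * w k i) - ε k * (∑ i, d i * x k i) - ∑ i, d i * vb i := by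
      rw [Finset.mul_sum, ← Finset.sum_sub_distrib, ← Finset.sum_sub_distrib]
      apply Finset.sum_congr rfl
      intro i _
      rw [hMd i]; ring
    have e4 : ∑ i, d i * w k i = -∑ i, xb i * w k i := by
      have : ∑ i, d i * w k i = (∑ i, x k i * w k i) - ∑ i, xb i * w k i := by
        rw [← Finset.sum_sub_distrib]
        apply Finset.sum_congr rfl
        intro i _; simp only [hddef]; ring
      rw [this]
      have : ∑ i, x k i * w k i = 0 := Finset.sum_eq_zero fun i _ => hx3 k i
      rw [this]; ring
    have e5 : ∑ i, d i * vb i = (∑ i, x k i * vb i) - C := by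
      rw [hCdef, ← Finset.sum_sub_distrib]
      apply Finset.sum_congr rfl
      intro i _; simp only [hddef]; ring
    have h6 : 0 ≤ ∑ i, xb i * w k i :=
      Finset.sum_nonneg fun i _ => mul_nonneg (hxb1 i) (hx2 k i)
    have h7 : 0 ≤ ∑ i, x k i * vb i :=
      Finset.sum_nonneg fun i _ => mul_nonneg (hx1 k i) (hxb2 i)
    have h8 : ε k * (∑ i, d i * x k i) ≤ C := by
      rw [e3, e4, e5] at h0
      linarith
    have e9 : ∑ i, d i * x k i = N2 k + ∑ i, d i * xb i := by
      rw [hN2def, ← Finset.sum_add_distrib]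
      apply Finset.sum_congr rfl
      intro i _; simp only [hddef]; ring
    have hcs : (∑ i, d i * xb i)^2 ≤ N2 k * B2 :=
      Finset.sum_mul_sq_le_sq_mul_sq Finset.univ d xb
    have h10 : -(Real.sqrt (N2 k) * Real.sqrt B2) ≤ ∑ i, d i * xb i := by
      have h11 : |∑ i, d i * xb i| ≤ Real.sqrt (N2 k * B2) := Real.abs_le_sqrt hcs
      rw [Real.sqrt_mul (hN20 k)] at h11
      have := neg_abs_le (∑ i, d i * xb i)
      linarith
    have h12 : N2 k - Real.sqrt (N2 k) * Real.sqrt B2 ≤ ∑ i, d i * x k i := by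
      rw [e9]; linarith
    have h13 : ε k * (N2 k - Real.sqrt (N2 k) * Real.sqrt B2) ≤ C :=
      le_trans (mul_le_mul_of_nonneg_left h12 (hε_pos k).le) h8
    nlinarith [h13]
  -- ε k * sqrt (N2 k) → 0
  have htk : ∀ k, (ε k * Real.sqrt (N2 k))^2 ≤ 2 * ε k * C + (ε k)^2 * B2 := by
    intro k
    have h1 : Real.sqrt (N2 k)^2 = N2 k := Real.sq_sqrt (hN20 k)
    have h2 : Real.sqrt B2 ^2 = B2 := Real.sq_sqrt hB20
    nlinarith [hbound k, hε_pos k, sq_nonneg (ε k * Real.sqrt B2 - ε k * Real.sqrt (N2 k)),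
      Real.sqrt_nonneg (N2 k), Real.sqrt_nonneg B2, sq_nonneg (ε k)]
  have hg_to0 : Tendsto (fun k => 2 * ε k * C + (ε k)^2 * B2) atTop (nhds 0) := by
    have h1 : Tendsto (fun k => 2 * ε k * C) atTop (nhds (2 * 0 * C)) :=
      (hε_to0.const_mul 2).mul_const C
    have h2 : Tendsto (fun k => (ε k)^2 * B2) atTop (nhds (0^2 * B2)) :=
      (hε_to0.pow 2).mul_const B2
    have := h1.add h2
    norm_num at this
    exact this
  have hsq_to0 : Tendsto (fun k => ε k * Real.sqrt (N2 k)) atTop (nhds 0) := by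
    apply squeeze_zero (fun k => by positivity)
      (g := fun k => Real.sqrt (2 * ε k * C + (ε k)^2 * B2))
    · intro k
      have h1 : ε k * Real.sqrt (N2 k) = Real.sqrt ((ε k * Real.sqrt (N2 k))^2) :=
        (Real.sqrt_sq (by positivity)).symm
      rw [h1]
      exact Real.sqrt_le_sqrt (htk k)
    · have := (Real.continuous_sqrt.tendsto 0).comp hg_to0
      simpa [Function.comp_def] using this
  have hεx : ∀ i, Tendsto (fun k => ε k * x k i) atTop (nhds 0) := by
    intro i
    apply squeeze_zero_norm (a := fun k => ε k * Real.sqrt (N2 k) + ε k * |xb i|)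
    · intro k
      have h1 : (x k i - xb i)^2 ≤ N2 k :=
        Finset.single_le_sum (f := fun j => (x k j - xb j)^2)
          (fun j _ => sq_nonneg _) (Finset.mem_univ i)
      have h2 : |x k i - xb i| ≤ Real.sqrt (N2 k) := by
        rw [← Real.sqrt_sq_eq_abs]
        exact Real.sqrt_le_sqrt h1
      have h3 : |x k i| ≤ Real.sqrt (N2 k) + |xb i| := by
        have := abs_sub_abs_le_abs_sub (x k i) (xb i)
        linarith
      rw [Real.norm_eq_abs, abs_mul, abs_of_pos (hε_pos k)]
      calc ε k * |x k i| ≤ ε k * (Real.sqrt (N2 k) + |xb i|) :=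
            mul_le_mul_of_nonneg_left h3 (hε_pos k).le
        _ = ε k * Real.sqrt (N2 k) + ε k * |xb i| := by ring
    · have h2 : Tendsto (fun k => ε k * |xb i|) atTop (nhds (0 * |xb i|)) :=
        hε_to0.mul_const _
      norm_num at h2
      have := hsq_to0.add h2
      norm_num at this
      exact this
  -- constant support subsequence
  set S : ℕ → Finset (Fin n) := fun k => Finset.univ.filter (fun i => x k i ≠ 0) with hSdef
  obtain ⟨S0, hS0⟩ := Finite.exists_infinite_fiber S
  have hinf : (S ⁻¹' {S0} : Set ℕ).Infinite := Set.infinite_coe_iff.mp hS0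
  set e := hinf.natEmbedding with hedef
  set φ : ℕ → ℕ := fun m => (e m : ℕ) with hφdef
  have hφinj : Function.Injective φ := fun a b h => e.injective (Subtype.ext h)
  have hφti : Tendsto φ atTop atTop := by
    have := hφinj.tendsto_cofinite
    rwa [Nat.cofinite_eq_atTop] at this
  have hφS : ∀ m, S (φ m) = S0 := by
    intro m
    have h := (e m).2
    rw [Set.mem_preimage, Set.mem_singleton_iff] at h
    exact h
  have hsupp : ∀ m j, j ∉ S0 → x (φ m) j = 0 := by
    intro m j hj
    by_contra hne
    exact hj (by rw [← hφS m, hSdef]; simp [hne])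
  have hwzero : ∀ m j, j ∈ S0 → w (φ m) j = 0 := by
    intro m j hj
    have hne : x (φ m) j ≠ 0 := by
      rw [← hφS m, hSdef] at hj
      simpa using hj
    have := hx3 (φ m) j
    rcases mul_eq_zero.mp this with h | h
    · exact absurd h hne
    · exact h
  -- cone membership and limit
  set V : {j // j ∈ S0} → ({j // j ∈ S0} → ℝ) := fun j i => M (i : Fin n) (j : Fin n) with hVdef
  set c : ℕ → ({j // j ∈ S0} → ℝ) := fun m i => M.mulVec (x (φ m)) (i : Fin n) with hcdef
  have hsum_repr : ∀ (z : Fin n → ℝ), (∀ j, j ∉ S0 → z j = 0) →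
      ∀ i : {j // j ∈ S0}, M.mulVec z (i : Fin n) = (∑ j : {j // j ∈ S0}, z (j : Fin n) • V j) i := by
    intro z hz i
    rw [Finset.sum_apply]
    have e1 : M.mulVec z (i : Fin n) = ∑ j, M (i : Fin n) j * z j := by
      simp [Matrix.mulVec, dotProduct]
    rw [e1]
    have e2 : ∑ j, M (i : Fin n) j * z j = ∑ j ∈ S0, M (i : Fin n) j * z j := by
      symm
      apply Finset.sum_subset (Finset.subset_univ S0)
      intro j _ hj
      rw [hz j hj, mul_zero]
    rw [e2, ← Finset.sum_attach S0 (fun j => M (i : Fin n) j * z j)]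
    apply Finset.sum_congr rfl
    intro j _
    simp [hVdef, mul_comm]
  have hc_mem : ∀ m, c m ∈ {y : {j // j ∈ S0} → ℝ |
      ∃ t : {j // j ∈ S0} → ℝ, (∀ i, 0 ≤ t i) ∧ y = ∑ i, t i • V i} := by
    intro m
    refine ⟨fun j => x (φ m) (j : Fin n), fun j => hx1 _ _, ?_⟩
    funext i
    rw [hcdef]
    exact hsum_repr (x (φ m)) (hsupp m) i
  have hc_lim : Tendsto c atTop (nhds (fun i : {j // j ∈ S0} => -q (i : Fin n))) := by
    rw [tendsto_pi_nhds]
    intro i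
    have e1 : ∀ m, c m i = -q (i : Fin n) - ε (φ m) * x (φ m) (i : Fin n) := by
      intro m
      have h1 : w (φ m) (i : Fin n) = 0 := hwzero m _ i.2
      rw [hwdef] at h1
      simp only at h1
      rw [hAmul (φ m) (x (φ m)) (i : Fin n)] at h1
      rw [hcdef]
      simp only
      linarith
    simp_rw [e1]
    have h2 : Tendsto (fun m => ε (φ m) * x (φ m) (i : Fin n)) atTop (nhds 0) :=
      (hεx (i : Fin n)).comp hφti
    have := (tendsto_const_nhds (x := -q (i : Fin n)) (f := atTop (α := ℕ))).sub h2
    norm_num at this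
    exact this
  have hmem := (isClosed_cone V).mem_of_tendsto hc_lim (Filter.Eventually.of_forall hc_mem)
  obtain ⟨t0, ht00, ht0sum⟩ := hmem
  set xs : Fin n → ℝ := fun j => if h : j ∈ S0 then t0 ⟨j, h⟩ else 0 with hxsdef
  have hxs0 : ∀ j, j ∉ S0 → xs j = 0 := by intro j hj; simp [hxsdef, hj]
  have hxsnn : ∀ j, 0 ≤ xs j := by
    intro j
    by_cases h : j ∈ S0
    · simpa [hxsdef, h] using ht00 ⟨j, h⟩
    · simp [hxsdef, h]
  have hMxs : ∀ i : {j // j ∈ S0}, M.mulVec xs (i : Fin n) = -q (i : Fin n) := by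
    intro i
    have e1 := hsum_repr xs hxs0 i
    have e2 : (∑ j : {j // j ∈ S0}, xs (j : Fin n) • V j) = ∑ j, t0 j • V j := by
      apply Finset.sum_congr rfl
      intro j _
      congr 1
      rcases j with ⟨j, hj⟩
      simp [hxsdef, hj]
    rw [e1, e2, ← ht0sum]
  -- boundedness
  set R2 : ℝ := ∑ j, xs j ^ 2 with hR2def
  have hR20 : 0 ≤ R2 := Finset.sum_nonneg fun j _ => sq_nonneg _
  have hyb : ∀ m, ∑ j, (x (φ m) j)^2 ≤ R2 := by
    intro m
    set y : Fin n → ℝ := x (φ m) with hydef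
    set d : Fin n → ℝ := fun j => y j - xs j with hddef
    have h0 := hpsd d
    have e1 : ∀ j, d j * M.mulVec d j = d j * (-(ε (φ m)) * y j) := by
      intro j
      by_cases hj : j ∈ S0
      · have hMdj : M.mulVec d j = -(ε (φ m)) * y j := by
          have ha : M.mulVec d j = M.mulVec y j - M.mulVec xs j := by
            have : d = y - xs := rfl
            rw [this, Matrix.mulVec_sub]; rfl
          have hb : M.mulVec y j = -q j - ε (φ m) * y j := by
            have h1 : w (φ m) j = 0 := hwzero m _ hj
            rw [hwdef] at h1
            simp only at h1
            rw [hAmul (φ m) (x (φ m)) j] at h1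
            rw [hydef]
            linarith
          have hc' : M.mulVec xs j = -q j := hMxs ⟨j, hj⟩
          rw [ha, hb, hc']
          ring
        rw [hMdj]
      · have hdj : d j = 0 := by
          rw [hddef]
          simp only
          rw [hydef, hsupp m j hj, hxs0 j hj]
          ring
        rw [hdj]; ring
    have e2 : ∑ j, d j * M.mulVec d j = -(ε (φ m)) * ∑ j, d j * y j := by
      rw [Finset.mul_sum]
      apply Finset.sum_congr rfl
      intro j _
      rw [e1 j]; ring
    have h3 : ∑ j, d j * y j ≤ 0 := by
      rw [e2] at h0
      nlinarith [hε_pos (φ m)]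
    have e4 : ∑ j, d j * y j = (∑ j, y j^2) - ∑ j, xs j * y j := by
      rw [← Finset.sum_sub_distrib]
      apply Finset.sum_congr rfl
      intro j _
      simp only [hddef]; ring
    have hcs : (∑ j, xs j * y j)^2 ≤ R2 * ∑ j, y j^2 :=
      Finset.sum_mul_sq_le_sq_mul_sq Finset.univ xs y
    have hynn : 0 ≤ ∑ j, y j^2 := Finset.sum_nonneg fun j _ => sq_nonneg _
    have h5 : ∑ j, y j^2 ≤ ∑ j, xs j * y j := by rw [e4] at h3; linarith
    nlinarith [hcs, hynn, h5]
  -- compact subsequence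
  have hball : ∀ m, x (φ m) ∈ Metric.closedBall (0 : Fin n → ℝ) (Real.sqrt R2) := by
    intro m
    rw [Metric.mem_closedBall, dist_zero_right]
    rw [pi_norm_le_iff_of_nonneg (Real.sqrt_nonneg _)]
    intro j
    rw [Real.norm_eq_abs, ← Real.sqrt_sq_eq_abs]
    apply Real.sqrt_le_sqrt
    calc (x (φ m) j)^2 ≤ ∑ j', (x (φ m) j')^2 :=
          Finset.single_le_sum (f := fun j' => (x (φ m) j')^2)
            (fun j' _ => sq_nonneg _) (Finset.mem_univ j)
      _ ≤ R2 := hyb m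
  obtain ⟨xh, _, ψ, hψmono, hψtend⟩ :=
    (isCompact_closedBall (0 : Fin n → ℝ) (Real.sqrt R2)).tendsto_subseq hball
  -- pass to the limit
  set z : ℕ → Fin n → ℝ := fun m => x (φ (ψ m)) with hzdef
  have hz_lim : Tendsto z atTop (nhds xh) := hψtend
  have hz_comp : ∀ i, Tendsto (fun m => z m i) atTop (nhds (xh i)) :=
    fun i => (tendsto_pi_nhds.mp hz_lim) i
  have hφψ : Tendsto (fun m => φ (ψ m)) atTop atTop := hφti.comp hψmono.tendsto_atTop
  have hεz : ∀ i, Tendsto (fun m => ε (φ (ψ m)) * z m i) atTop (nhds 0) :=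
    fun i => (hεx i).comp hφψ
  have hMcont : ∀ i, Tendsto (fun m => M.mulVec (z m) i + q i) atTop
      (nhds (M.mulVec xh i + q i)) := by
    intro i
    have e1 : ∀ (u : Fin n → ℝ), M.mulVec u i = ∑ j, M i j * u j := by
      intro u; simp [Matrix.mulVec, dotProduct]
    simp_rw [e1]
    apply Tendsto.add_const
    apply tendsto_finset_sum
    intro j _
    exact (hz_comp j).const_mul (M i j)
  have hxh_nn : ∀ i, 0 ≤ xh i := by
    intro i
    apply ge_of_tendsto (hz_comp i)
    exact Filter.Eventually.of_forall fun m => hx1 _ i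
  have hw_eq : ∀ m i, M.mulVec (z m) i + q i = w (φ (ψ m)) i - ε (φ (ψ m)) * z m i := by
    intro m i
    rw [hwdef]
    simp only
    rw [hAmul (φ (ψ m)) (x (φ (ψ m))) i]
    rw [hzdef]
    ring
  have hv_nn : ∀ i, 0 ≤ M.mulVec xh i + q i := by
    intro i
    have hneg : Tendsto (fun m => -(ε (φ (ψ m)) * z m i)) atTop (nhds 0) := by
      have := (hεz i).neg
      norm_num at this
      exact this
    apply le_of_tendsto_of_tendsto' hneg (hMcont i)
    intro m
    rw [hw_eq m i]
    have := hx2 (φ (ψ m)) i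
    have h1 : 0 ≤ w (φ (ψ m)) i := this
    linarith
  have hcompl : ∀ i, xh i * (M.mulVec xh i + q i) = 0 := by
    intro i
    have h1 : Tendsto (fun m => z m i * (M.mulVec (z m) i + q i)) atTop
        (nhds (xh i * (M.mulVec xh i + q i))) := (hz_comp i).mul (hMcont i)
    have h2 : ∀ m, z m i * (M.mulVec (z m) i + q i) = -(ε (φ (ψ m)) * z m i) * z m i := by
      intro m
      rw [hw_eq m i]
      have h3 := hx3 (φ (ψ m)) i
      have h4 : z m i * w (φ (ψ m)) i = 0 := h3
      nlinarith [h4]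
    have h5 : Tendsto (fun m => -(ε (φ (ψ m)) * z m i) * z m i) atTop (nhds 0) := by
      have h6 := ((hεz i).neg).mul (hz_comp i)
      norm_num at h6
      have h7 : (fun m => -(ε (φ (ψ m)) * z m i) * z m i)
          = fun m => -(ε (φ (ψ m)) * z m i * z m i) := by
        funext m; ring
      rw [h7]
      exact h6
    simp_rw [h2] at h1
    exact tendsto_nhds_unique h1 h5
  refine ⟨xh, hxh_nn, hv_nn, ?_⟩
  exact Finset.sum_eq_zero fun i _ => hcompl i


lemma sIdx_eq_zero_of_sol {n : ℕ} (r : ℝ) (hr : 2 ≤ r) (M : Matrix (Fin n) (Fin n) ℝ)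
    (q : Fin n → ℝ) {x : Fin n → ℝ} (hx : x ∈ solSet M q) (i : Fin n) :
    sIdx r M q x i = 0 ∧ tIdx r M q x i = 0 := by
  have hr0 : r ≠ 0 := by positivity
  have hr1 : r - 1 ≠ 0 := by intro h; nlinarith
  obtain ⟨hxnn, hvnn, hsum⟩ := hx
  have hcompl : x i * (M.mulVec x i + q i) = 0 :=
    (Finset.sum_eq_zero_iff_of_nonneg
      (fun j _ => mul_nonneg (hxnn j) (hvnn j))).mp hsum i (Finset.mem_univ i)
  have hnegx : max (-(x i)) 0 = 0 := max_eq_right (neg_nonpos.mpr (hxnn i))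
  have hnegv : max (-(M.mulVec x i + q i)) 0 = 0 := max_eq_right (neg_nonpos.mpr (hvnn i))
  have hxmax : max (x i) 0 = x i := max_eq_left (hxnn i)
  have hvmax : max (M.mulVec x i + q i) 0 = M.mulVec x i + q i := max_eq_left (hvnn i)
  constructor
  · unfold sIdx
    rw [hnegx, Real.zero_rpow hr1, hxmax, hvmax]
    rcases mul_eq_zero.mp hcompl with h | h
    · rw [h, Real.zero_rpow hr1, zero_mul]; ring
    · rw [h, Real.zero_rpow hr0, mul_zero]; ring
  · unfold tIdx
    rw [hnegv, Real.zero_rpow hr1, hxmax, hvmax]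
    rcases mul_eq_zero.mp hcompl with h | h
    · rw [h, Real.zero_rpow hr0, zero_mul]; ring
    · rw [h, Real.zero_rpow hr1, mul_zero]; ring

end Aux

theorem stmt_12 {n : ℕ} (r : ℝ) (hr : 2 ≤ r) (M : Matrix (Fin n) (Fin n) ℝ)
    (q : Fin n → ℝ) (hpsd : ∀ x : Fin n → ℝ, 0 ≤ ∑ i, x i * M.mulVec x i)
    (hfea : (feaSet M q).Nonempty) :
    {x : Fin n → ℝ | fderiv ℝ (fr r M q) x = 0} = solSet M q ∧
    (solSet M q).Nonempty := by
  obtain ⟨xb, hxb⟩ := hfea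
  constructor
  · ext x
    simp only [Set.mem_setOf_eq]
    rw [(hasFDerivAt_fr r hr M q x).fderiv, stationary_iff]
    constructor
    · intro h
      exact sol_of_stationary r hr M q hpsd xb hxb x h
    · intro hx j
      rw [(sIdx_eq_zero_of_sol r hr M q hx j).1]
      have : ∀ i, tIdx r M q x i = 0 := fun i => (sIdx_eq_zero_of_sol r hr M q hx i).2
      simp [this]
  · exact sol_nonempty M q hpsd ⟨xb, hxb⟩
end

section
/- If M is a P_s-matrix with all entries nonnegative, and the set θ := {i : q_i < 0} satisfies |θ| ≤ s, then the sparse LCP sol(M,q) ∩ {x : ‖x‖₀ ≤ s} is nonempty and contains a unique point x* with supp(x*) ⊆ θ. -/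
open Matrix

open Filter

/-- LCP solution predicate, pointwise complementarity form. -/
def isSol {m : Type*} [Fintype m] (A : Matrix m m ℝ) (b x : m → ℝ) : Prop :=
  (∀ i, 0 ≤ x i) ∧ (∀ i, 0 ≤ A.mulVec x i + b i) ∧ (∀ i, x i * (A.mulVec x i + b i) = 0)

/-- All principal minors (including the empty and full ones) are positive. -/
def minorsPosF {m : Type*} [Fintype m] [DecidableEq m] (A : Matrix m m ℝ) : Prop :=
  ∀ S : Finset m, 0 < (A.submatrix (fun i : S => (i : m)) (fun i : S => (i : m))).det

section DetLemmas

variable {m : Type*} [Fintype m] [DecidableEq m] {m' : Type*} [Fintype m'] [DecidableEq m']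
set_option linter.unusedSectionVars false

lemma det_submatrix_map (A : Matrix m m ℝ) (f : m' ↪ m) (S : Finset m') :
    ((A.submatrix f f).submatrix (fun i : S => (i : m')) (fun i : S => (i : m'))).det
      = (A.submatrix (fun i : (S.map f) => (i : m)) (fun i : (S.map f) => (i : m))).det := by
  have hcard : Fintype.card S = Fintype.card (S.map f) := by
    rw [Fintype.card_coe, Fintype.card_coe, Finset.card_map]
  let g : S → (S.map f) := fun i => ⟨f i, Finset.mem_map_of_mem f i.2⟩
  have hg : Function.Bijective g := by
    refine (Fintype.bijective_iff_injective_and_card g).2 ⟨?_, hcard⟩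
    intro a b hab
    have : f a = f b := congrArg Subtype.val hab
    exact Subtype.ext (f.injective this)
  let e := Equiv.ofBijective g hg
  have := Matrix.det_submatrix_equiv_self e
    (A.submatrix (fun i : (S.map f) => (i : m)) (fun i : (S.map f) => (i : m)))
  rw [← this]
  rfl

lemma minorsPosF.submatrix {A : Matrix m m ℝ} (hA : minorsPosF A) (f : m' ↪ m) :
    minorsPosF (A.submatrix f f) := by
  intro S
  rw [det_submatrix_map A f S]
  exact hA (S.map f)

lemma minorsPosF.diag_pos {A : Matrix m m ℝ} (hA : minorsPosF A) (i : m) :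
    0 < A i i := by
  have h0 := hA {i}
  haveI : Subsingleton ({i} : Finset m) :=
    ⟨by rintro ⟨a, ha⟩ ⟨b, hb⟩; simp only [Finset.mem_singleton] at ha hb; subst ha; subst hb; rfl⟩
  rw [Matrix.det_eq_elem_of_subsingleton _ ⟨i, Finset.mem_singleton_self i⟩] at h0
  exact h0

end DetLemmas

section DetExpansion

variable {m : Type*} [Fintype m] [DecidableEq m]

lemma det_piecewise_eq (A : Matrix m m ℝ) (d : m → ℝ) (s : Finset m) :
    (Matrix.detRowAlternating
        (s.piecewise (fun i => A i) (fun i => Matrix.diagonal d i)) : ℝ)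
      = (∏ i, (if i ∈ s then (1:ℝ) else d i)) *
        (A.submatrix (fun i : s => (i : m)) (fun i : s => (i : m))).det := by
  classical
  have hrows : s.piecewise (fun i => A i) (fun i => Matrix.diagonal d i)
      = fun i => (if i ∈ s then (1:ℝ) else d i) •
        (if i ∈ s then A i else Pi.single i 1) := by
    funext i
    by_cases hi : i ∈ s
    · simp [Finset.piecewise_eq_of_mem _ _ _ hi, hi]
    · simp only [Finset.piecewise_eq_of_notMem _ _ _ hi, if_neg hi]
      funext j
      rcases eq_or_ne i j with h | h
      · subst h; simp [Matrix.diagonal_apply_eq]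
      · simp [Matrix.diagonal_apply_ne _ h, Pi.single_eq_of_ne (Ne.symm h)]
  have hsmul : (Matrix.detRowAlternating
      (fun i => (if i ∈ s then (1:ℝ) else d i) •
        (if i ∈ s then A i else Pi.single i 1)) : ℝ)
      = (∏ i, (if i ∈ s then (1:ℝ) else d i)) •
        (Matrix.detRowAlternating (fun i => if i ∈ s then A i else Pi.single i 1) : ℝ) :=
    Matrix.detRowAlternating.toMultilinearMap.map_smul_univ _ _
  rw [hrows, hsmul, smul_eq_mul]
  congr 1
  -- determinant of the matrix with identity rows off `s`
  set B : Matrix m m ℝ := Matrix.of (fun i => if i ∈ s then A i else Pi.single i 1) with hB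
  have hBdet : (Matrix.detRowAlternating
      (fun i => if i ∈ s then A i else Pi.single i 1) : ℝ) = B.det := rfl
  rw [hBdet]
  let e : {x // x ∈ s} ⊕ {x // ¬ x ∈ s} ≃ m := Equiv.sumCompl (· ∈ s)
  rw [← Matrix.det_submatrix_equiv_self e B]
  have hblock : B.submatrix e e =
      Matrix.fromBlocks (A.submatrix (fun i : s => (i : m)) (fun i : s => (i : m)))
        (A.submatrix (fun i : s => (i : m)) (fun i : {x // ¬ x ∈ s} => (i : m)))
        0 1 := by
    ext i j
    rcases i with i | i <;> rcases j with j | j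
    · simp [e, B, i.2]
    · simp [e, B, i.2]
    · simp only [Matrix.submatrix_apply, Equiv.sumCompl_apply_inr, Equiv.sumCompl_apply_inl,
        Matrix.fromBlocks_apply₂₁, B, Matrix.of_apply, if_neg i.2, Matrix.zero_apply, e]
      have : (j : m) ≠ (i : m) := fun h => i.2 (h ▸ j.2)
      simp [Pi.single_eq_of_ne this]
    · simp only [Matrix.submatrix_apply, Equiv.sumCompl_apply_inr,
        Matrix.fromBlocks_apply₂₂, B, Matrix.of_apply, if_neg i.2, e]
      rcases eq_or_ne i j with h | h
      · subst h; simp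
      · have hne : (j : m) ≠ (i : m) := fun hc => h (Subtype.ext hc.symm)
        simp [Pi.single_eq_of_ne hne, Matrix.one_apply_ne' (id (Ne.symm h) : j ≠ i)]
  rw [hblock, Matrix.det_fromBlocks_zero₂₁, Matrix.det_one, mul_one]

lemma det_add_diagonal_pos {A : Matrix m m ℝ} (hA : minorsPosF A)
    {d : m → ℝ} (hd : ∀ i, 0 ≤ d i) :
    0 < (A + Matrix.diagonal d).det := by
  classical
  have hsplit : (A + Matrix.diagonal d).det
      = ∑ s : Finset m, (Matrix.detRowAlternating
          (s.piecewise (fun i => A i) (fun i => Matrix.diagonal d i)) : ℝ) := by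
    exact Matrix.detRowAlternating.toMultilinearMap.map_add_univ
      (fun i => A i) (fun i => Matrix.diagonal d i)
  rw [hsplit]
  apply Finset.sum_pos'
  · intro s _
    rw [det_piecewise_eq]
    apply mul_nonneg
    · apply Finset.prod_nonneg
      intro i _
      by_cases hi : i ∈ s <;> simp [hi, hd i]
    · exact le_of_lt (hA s)
  · refine ⟨Finset.univ, Finset.mem_univ _, ?_⟩
    rw [det_piecewise_eq]
    have : (∏ i, (if i ∈ (Finset.univ : Finset m) then (1:ℝ) else d i)) = 1 := by
      simp
    rw [this, one_mul]
    exact hA Finset.univ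

end DetExpansion

section SignReversal

variable {m : Type*} [Fintype m] [DecidableEq m]

lemma sign_reversal {A : Matrix m m ℝ} (hA : minorsPosF A)
    {z : m → ℝ} (hz : ∀ i, z i * A.mulVec z i ≤ 0) : z = 0 := by
  classical
  by_contra hz0
  obtain ⟨i0, hi0⟩ : ∃ i, z i ≠ 0 := Function.ne_iff.mp hz0
  set p : m → Prop := fun i => z i ≠ 0 with hp
  let B := A.submatrix ((↑) : Subtype p → m) ((↑) : Subtype p → m)
  have hB : minorsPosF B := hA.submatrix ⟨Subtype.val, Subtype.val_injective⟩
  let d : Subtype p → ℝ := fun i => -(A.mulVec z i) / z i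
  have hd : ∀ i, 0 ≤ d i := by
    rintro ⟨i, hi⟩
    have h1 : A.mulVec z i / z i ≤ 0 := by
      have h2 : (z i * A.mulVec z i) / (z i * z i) = A.mulVec z i / z i :=
        mul_div_mul_left _ _ hi
      rw [← h2]
      exact div_nonpos_of_nonpos_of_nonneg (hz i) (mul_self_nonneg _)
    simpa [d, neg_div] using neg_nonneg.mpr h1
  let zr : Subtype p → ℝ := fun i => z i
  have hsum : ∀ i : Subtype p, (∑ j : Subtype p, A i.val j.val * z j.val)
      = A.mulVec z i.val := by
    intro i
    have h1 : ∑ j ∈ Finset.univ.filter p, A i.val j * z j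
        = ∑ j : m, A i.val j * z j := by
      apply Finset.sum_filter_of_ne
      intro j _ hj
      exact fun hzj => hj (by rw [hzj, mul_zero])
    have h2 : ∑ j ∈ Finset.univ.filter p, A i.val j * z j
        = ∑ j : Subtype p, A i.val j.val * z j.val := by
      rw [← Finset.sum_subtype (Finset.univ.filter p)
        (fun x => by simp [hp]) (fun j => A i.val j * z j)]
    rw [← h2, h1, Matrix.mulVec, dotProduct]
  have hker : (B + Matrix.diagonal d).mulVec zr = 0 := by
    funext i
    have hsplit : ((B + Matrix.diagonal d) *ᵥ zr) i
        = B.mulVec zr i + (Matrix.diagonal d).mulVec zr i := by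
      rw [Matrix.add_mulVec]; rfl
    show ((B + Matrix.diagonal d) *ᵥ zr) i = 0
    rw [hsplit, Matrix.mulVec_diagonal]
    have hBz : B.mulVec zr i = A.mulVec z i.val := by
      rw [Matrix.mulVec, dotProduct]
      exact hsum i
    have hdz : d i * zr i = -(A.mulVec z i.val) := by
      simp only [d, zr]
      exact div_mul_cancel₀ _ i.2
    simp [hBz, hdz]
  have hdet0 : (B + Matrix.diagonal d).det = 0 := by
    rw [← Matrix.exists_mulVec_eq_zero_iff]
    exact ⟨zr, fun h => hi0 (congrFun h ⟨i0, hi0⟩), hker⟩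
  exact absurd hdet0 (ne_of_gt (det_add_diagonal_pos hB hd))

lemma lcp_unique {A : Matrix m m ℝ} (hA : minorsPosF A) {b x y : m → ℝ}
    (hx : isSol A b x) (hy : isSol A b y) : x = y := by
  have key : ∀ i, (x - y) i * A.mulVec (x - y) i ≤ 0 := by
    intro i
    have h1 : A.mulVec (x - y) i = A.mulVec x i - A.mulVec y i := by
      rw [Matrix.mulVec_sub]; rfl
    have h2 := hx.2.2 i
    have h3 := hy.2.2 i
    have h4 := mul_nonneg (hx.1 i) (hy.2.1 i)
    have h5 := mul_nonneg (hy.1 i) (hx.2.1 i)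
    have h6 : (x - y) i = x i - y i := rfl
    rw [h1, h6]
    nlinarith [h2, h3, h4, h5]
  have := sign_reversal hA key
  exact sub_eq_zero.mp this

end SignReversal

section Existence

lemma sol_le_bound {m : Type*} [Fintype m] [DecidableEq m] {A : Matrix m m ℝ} {b x : m → ℝ}
    (hApos : ∀ i j, 0 ≤ A i j) (hdiag : ∀ i, 0 < A i i) (hx : isSol A b x) (i : m) :
    x i ≤ max 0 (-b i) / A i i := by
  rcases eq_or_lt_of_le (hx.1 i) with h | h
  · rw [← h]
    exact div_nonneg (le_max_left _ _) (le_of_lt (hdiag i))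
  · have hw : A.mulVec x i + b i = 0 := by
      rcases mul_eq_zero.mp (hx.2.2 i) with h' | h'
      · exact absurd h' (ne_of_gt h)
      · exact h'
    have hsum : A i i * x i ≤ A.mulVec x i := by
      rw [Matrix.mulVec, dotProduct]
      exact Finset.single_le_sum (f := fun j => A i j * x j)
        (fun j _ => mul_nonneg (hApos i j) (hx.1 j)) (Finset.mem_univ i)
    have hle : A i i * x i ≤ max 0 (-b i) := by
      have : A.mulVec x i = -b i := by linarith
      rw [this] at hsum
      exact le_trans hsum (le_max_right _ _)
    rw [le_div_iff₀ (hdiag i)]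
    linarith [hle]

lemma isSol_reindex {m m' : Type*} [Fintype m] [Fintype m'] (e : m' ≃ m)
    {A : Matrix m m ℝ} {b x : m → ℝ}
    (h : isSol (A.submatrix e e) (b ∘ e) (x ∘ e)) : isSol A b x := by
  have key : ∀ i : m', (A.submatrix e e).mulVec (x ∘ e) i = A.mulVec x (e i) := by
    intro i
    rw [Matrix.mulVec, Matrix.mulVec, dotProduct, dotProduct]
    exact Equiv.sum_comp e (fun j => A (e i) j * x j)
  refine ⟨fun i => ?_, fun i => ?_, fun i => ?_⟩
  · have := h.1 (e.symm i); simpa using this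
  · have := h.2.1 (e.symm i)
    rw [key (e.symm i)] at this
    simpa using this
  · have := h.2.2 (e.symm i)
    rw [key (e.symm i)] at this
    simpa using this

lemma lcp_exists_fin : ∀ (n : ℕ) (A : Matrix (Fin n) (Fin n) ℝ), minorsPosF A →
    (∀ i j, 0 ≤ A i j) → ∀ b : Fin n → ℝ, ∃ x, isSol A b x := by
  intro n
  induction n with
  | zero =>
    intro A _ _ b
    exact ⟨0, fun i => i.elim0, fun i => i.elim0, fun i => i.elim0⟩
  | succ n ih =>
    intro A hA hApos b
    classical
    set l : Fin (n + 1) := Fin.last n with hl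
    set A' : Matrix (Fin n) (Fin n) ℝ := A.submatrix Fin.castSucc Fin.castSucc with hA'
    have hA'm : minorsPosF A' := hA.submatrix ⟨Fin.castSucc, Fin.castSucc_injective n⟩
    have hA'pos : ∀ i j, 0 ≤ A' i j := fun i j => hApos _ _
    have hA'diag : ∀ i, 0 < A' i i := fun i => hA'm.diag_pos i
    choose sol hsol using ih A' hA'm hA'pos
    set c : Fin n → ℝ := fun i => A i.castSucc l with hc
    set bt : ℝ → Fin n → ℝ := fun t i => b i.castSucc + t * c i with hbt
    set z : ℝ → Fin n → ℝ := fun t => sol (bt t) with hz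
    have hmv0 : ∀ (y : Fin n → ℝ) (t : ℝ) (i : Fin (n + 1)),
        A.mulVec (Fin.snoc y t) i = (∑ j : Fin n, A i j.castSucc * y j) + A i l * t := by
      intro y t i
      rw [Matrix.mulVec, dotProduct, Fin.sum_univ_castSucc]
      simp [Fin.snoc_castSucc, Fin.snoc_last, hl]
    have hA'mv : ∀ (y : Fin n → ℝ) (i : Fin n),
        A'.mulVec y i = ∑ j : Fin n, A i.castSucc j.castSucc * y j := by
      intro y i; rfl
    -- continuity of the parametrized solution
    have hzc : Continuous z := by
      rw [continuous_iff_seqContinuous]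
      intro u t hu
      apply Filter.tendsto_of_subseq_tendsto
      intro ns hns
      obtain ⟨Tm, hTm⟩ : ∃ Tm : ℝ, ∀ k, |u k| ≤ Tm := by
        obtain ⟨Tm, hTm⟩ := (hu.abs).bddAbove_range
        exact ⟨Tm, fun k => hTm ⟨k, rfl⟩⟩
      set Bd : Fin n → ℝ := fun i => max 0 (|b i.castSucc| + Tm * |c i|) / A' i i with hBd
      set K : Set (Fin n → ℝ) := Set.pi Set.univ (fun i => Set.Icc 0 (Bd i)) with hK
      have hKc : IsCompact K := isCompact_univ_pi (fun i => isCompact_Icc)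
      have hmem : ∀ k, z (u (ns k)) ∈ K := by
        intro k i _
        refine ⟨(hsol (bt (u (ns k)))).1 i, ?_⟩
        refine le_trans (sol_le_bound hA'pos hA'diag (hsol (bt (u (ns k)))) i) ?_
        rw [hBd, div_le_div_iff_of_pos_right (hA'diag i)]
        refine max_le (le_max_left _ _) (le_trans ?_ (le_max_right _ _))
        have h1 : -(bt (u (ns k)) i) ≤ |b i.castSucc| + |u (ns k)| * |c i| := by
          have h3 := abs_add_le (b i.castSucc) (u (ns k) * c i)
          have h2 := neg_le_abs (b i.castSucc + u (ns k) * c i)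
          rw [abs_mul] at h3
          show -(b i.castSucc + u (ns k) * c i) ≤ _
          linarith
        refine le_trans h1 ?_
        have : |u (ns k)| * |c i| ≤ Tm * |c i| :=
          mul_le_mul_of_nonneg_right (hTm (ns k)) (abs_nonneg _)
        linarith
      obtain ⟨w, hwK, φ, hφ, hwt⟩ := hKc.tendsto_subseq hmem
      refine ⟨φ, ?_⟩
      have hu' : Filter.Tendsto (fun k => u (ns (φ k))) atTop (nhds t) :=
        hu.comp ((hns.comp hφ.tendsto_atTop))
      have hcoord : ∀ i, Filter.Tendsto (fun k => z (u (ns (φ k))) i) atTop (nhds (w i)) := by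
        intro i
        exact (tendsto_pi_nhds.mp hwt i)
      -- the limit expression tendsto
      have hE : ∀ i, Filter.Tendsto
          (fun k => A'.mulVec (z (u (ns (φ k)))) i + bt (u (ns (φ k))) i) atTop
          (nhds (A'.mulVec w i + bt t i)) := by
        intro i
        have hsumT : Filter.Tendsto (fun k => A'.mulVec (z (u (ns (φ k)))) i) atTop
            (nhds (A'.mulVec w i)) := by
          have : ∀ k, A'.mulVec (z (u (ns (φ k)))) i
              = ∑ j : Fin n, A' i j * z (u (ns (φ k))) j := fun k => rfl
          rw [show A'.mulVec w i = ∑ j : Fin n, A' i j * w j from rfl]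
          simp only [this]
          exact tendsto_finset_sum _ (fun j _ => (hcoord j).const_mul _)
        have hbT : Filter.Tendsto (fun k => bt (u (ns (φ k))) i) atTop (nhds (bt t i)) := by
          rw [hbt]
          exact tendsto_const_nhds.add (hu'.mul_const _)
        exact hsumT.add hbT
      suffices hwz : w = z t by rw [← hwz]; exact hwt
      refine lcp_unique hA'm ?_ (hsol (bt t))
      refine ⟨fun i => ?_, fun i => ?_, fun i => ?_⟩
      · exact ge_of_tendsto' (hcoord i) (fun k => (hsol (bt (u (ns (φ k))))).1 i)
      · exact ge_of_tendsto' (hE i) (fun k => (hsol (bt (u (ns (φ k))))).2.1 i)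
      · refine tendsto_nhds_unique ((hcoord i).mul (hE i)) ?_
        have hzero : (fun k => z (u (ns (φ k))) i *
            (A'.mulVec (z (u (ns (φ k)))) i + bt (u (ns (φ k))) i)) = fun _ => (0:ℝ) :=
          funext (fun k => (hsol (bt (u (ns (φ k))))).2.2 i)
        rw [hzero]
        exact tendsto_const_nhds
    -- the last-coordinate function
    set g : ℝ → ℝ := fun t => (∑ j : Fin n, A l j.castSucc * z t j) + A l l * t + b l with hg
    have hgc : Continuous g := by
      rw [hg]
      refine Continuous.add (Continuous.add ?_ ?_) continuous_const
      · exact continuous_finset_sum _ (fun j _ =>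
          continuous_const.mul ((continuous_apply j).comp hzc))
      · exact continuous_const.mul continuous_id
    -- builder
    have build : ∀ t : ℝ, 0 ≤ t → 0 ≤ g t → t * g t = 0 → ∃ x, isSol A b x := by
      intro t ht hgt hprod
      refine ⟨Fin.snoc (z t) t, ?_, ?_, ?_⟩
      · intro i
        refine Fin.lastCases ?_ ?_ i
        · rw [Fin.snoc_last]; exact ht
        · intro j; rw [Fin.snoc_castSucc]; exact (hsol (bt t)).1 j
      · intro i
        refine Fin.lastCases ?_ ?_ i
        · rw [hmv0]
          have : (∑ j : Fin n, A l j.castSucc * z t j) + A l l * t + b l = g t := rfl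
          linarith [hgt, this]
        · intro j
          rw [hmv0]
          have hEq : (∑ jj : Fin n, A j.castSucc jj.castSucc * z t jj) + A j.castSucc l * t
              + b j.castSucc = A'.mulVec (z t) j + bt t j := by
            rw [hA'mv, hbt]; ring
          have := (hsol (bt t)).2.1 j
          linarith [hEq ▸ this]
      · intro i
        refine Fin.lastCases ?_ ?_ i
        · rw [Fin.snoc_last, hmv0]
          have hEq : (∑ j : Fin n, A l j.castSucc * z t j) + A l l * t + b l = g t := rfl
          rw [hEq]
          exact hprod
        · intro j
          rw [Fin.snoc_castSucc, hmv0]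
          have hEq : (∑ jj : Fin n, A j.castSucc jj.castSucc * z t jj) + A j.castSucc l * t
              + b j.castSucc = A'.mulVec (z t) j + bt t j := by
            rw [hA'mv, hbt]; ring
          rw [hEq]
          exact (hsol (bt t)).2.2 j
    -- conclude via IVT
    by_cases hg0 : 0 ≤ g 0
    · exact build 0 le_rfl hg0 (zero_mul _)
    · push_neg at hg0
      have hll : 0 < A l l := hA.diag_pos l
      set T : ℝ := (1 + |b l|) / A l l with hT
      have hT0 : 0 ≤ T := div_nonneg (by positivity) (le_of_lt hll)
      have hgT : 0 ≤ g T := by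
        have hsumnn : 0 ≤ ∑ j : Fin n, A l j.castSucc * z T j :=
          Finset.sum_nonneg (fun j _ => mul_nonneg (hApos _ _) ((hsol (bt T)).1 j))
        have hmul : A l l * T = 1 + |b l| := by
          rw [hT, mul_div_cancel₀ _ (ne_of_gt hll)]
        have habs : -(b l) ≤ |b l| := neg_le_abs _
        have : g T = (∑ j : Fin n, A l j.castSucc * z T j) + A l l * T + b l := rfl
        rw [this, hmul]
        linarith
      have hIvt := intermediate_value_Icc hT0 hgc.continuousOn
      have h0mem : (0:ℝ) ∈ Set.Icc (g 0) (g T) := ⟨le_of_lt hg0, hgT⟩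
      obtain ⟨t0, ht0, hgt0⟩ := hIvt h0mem
      exact build t0 ht0.1 (le_of_eq hgt0.symm) (by rw [hgt0]; ring)

lemma lcp_exists {m : Type*} [Fintype m] [DecidableEq m] {A : Matrix m m ℝ}
    (hA : minorsPosF A) (hApos : ∀ i j, 0 ≤ A i j) (b : m → ℝ) :
    ∃ x, isSol A b x := by
  classical
  let e : Fin (Fintype.card m) ≃ m := (Fintype.equivFin m).symm
  have hA0 : minorsPosF (A.submatrix e e) := hA.submatrix (e.toEmbedding)
  obtain ⟨x0, hx0⟩ := lcp_exists_fin _ (A.submatrix e e) hA0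
    (fun i j => hApos _ _) (b ∘ e)
  refine ⟨x0 ∘ e.symm, isSol_reindex e ?_⟩
  have : (x0 ∘ e.symm) ∘ e = x0 := by
    funext j; simp
  rw [this]
  exact hx0

end Existence

theorem stmt_14 {n : ℕ} (s : ℕ) (hs : 0 < s) (hsn : s ≤ n)
    (M : Matrix (Fin n) (Fin n) ℝ) (hP : IsPsMatrix s M)
    (hM : ∀ i j, 0 ≤ M i j) (q : Fin n → ℝ)
    (hθ : (Finset.univ.filter (fun i => q i < 0)).card ≤ s) :
    (solSet M q ∩ {x | zeroNorm x ≤ s}).Nonempty ∧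
    (∃! x : Fin n → ℝ, x ∈ solSet M q ∧ zeroNorm x ≤ s ∧
      ∀ i, x i ≠ 0 → q i < 0) := by
  classical
  set θ : Finset (Fin n) := Finset.univ.filter (fun i => q i < 0) with hθdef
  have hmemθ : ∀ i, i ∈ θ ↔ q i < 0 := by
    intro i; rw [hθdef]; simp
  set A : Matrix ↥θ ↥θ ℝ :=
    M.submatrix (Subtype.val : ↥θ → Fin n) Subtype.val with hAdef
  have hA : minorsPosF A := by
    intro S
    rw [hAdef]
    show 0 < ((M.submatrix (⇑(⟨Subtype.val, Subtype.val_injective⟩ : (↥θ) ↪ Fin n))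
      (⇑(⟨Subtype.val, Subtype.val_injective⟩ : (↥θ) ↪ Fin n))).submatrix
      (fun i : S => (i : ↥θ)) (fun i : S => (i : ↥θ))).det
    rw [det_submatrix_map M ⟨Subtype.val, Subtype.val_injective⟩ S]
    rcases S.eq_empty_or_nonempty with hS | hS
    · subst hS
      haveI : IsEmpty ↥((∅ : Finset ↥θ).map ⟨Subtype.val, Subtype.val_injective⟩) := by
        rw [Finset.isEmpty_coe_sort]
        simp
      rw [Matrix.det_isEmpty]
      norm_num
    · refine hP _ (hS.map) ?_
      rw [Finset.card_map]
      exact le_trans (le_trans (Finset.card_le_univ S) (le_of_eq (Fintype.card_coe θ))) hθ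
  have hApos : ∀ (i j : ↥θ), 0 ≤ A i j := fun i j => hM _ _
  obtain ⟨x0, hx0⟩ := lcp_exists hA hApos (fun j => q j.val)
  set x : Fin n → ℝ := fun i => if h : i ∈ θ then x0 ⟨i, h⟩ else 0 with hxdef
  have hxθ : ∀ (j : ↥θ), x j.val = x0 j := by
    rintro ⟨j, hj⟩; rw [hxdef]; simp [hj]
  have hxoff : ∀ i, i ∉ θ → x i = 0 := by
    intro i hi; rw [hxdef]; simp [hi]
  -- general sum lemma
  have hsum : ∀ (v : Fin n → ℝ), (∀ i, i ∉ θ → v i = 0) →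
      ∀ i, M.mulVec v i = ∑ j : ↥θ, M i j.val * v j.val := by
    intro v hv i
    rw [Matrix.mulVec, dotProduct, Finset.sum_coe_sort θ (fun j => M i j * v j)]
    refine (Finset.sum_subset (Finset.subset_univ θ) ?_).symm
    intro j _ hj
    rw [hv j hj, mul_zero]
  have hAmv : ∀ (v : Fin n → ℝ) (hv : ∀ i, i ∉ θ → v i = 0) (j : ↥θ),
      A.mulVec (fun k => v k.val) j = M.mulVec v j.val := by
    intro v hv j
    rw [hsum v hv]
    rfl
  have hx0x : (fun k : ↥θ => x k.val) = x0 := funext hxθ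
  -- x is a solution of the big LCP
  have hxpos : ∀ i, 0 ≤ x i := by
    intro i
    rw [hxdef]
    by_cases h : i ∈ θ
    · simpa [h] using hx0.1 ⟨i, h⟩
    · simp [h]
  have hxw : ∀ i, 0 ≤ M.mulVec x i + q i := by
    intro i
    by_cases h : i ∈ θ
    · have := hx0.2.1 ⟨i, h⟩
      rw [← hx0x, hAmv x hxoff ⟨i, h⟩] at this
      exact this
    · have hq : 0 ≤ q i := by
        by_contra hq
        exact h ((hmemθ i).mpr (lt_of_not_ge hq))
      have : 0 ≤ M.mulVec x i := by
        rw [hsum x hxoff]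
        exact Finset.sum_nonneg (fun j _ => mul_nonneg (hM _ _) (by rw [hxθ j]; exact hx0.1 j))
      linarith
  have hxcomp : ∀ i, x i * (M.mulVec x i + q i) = 0 := by
    intro i
    by_cases h : i ∈ θ
    · have := hx0.2.2 ⟨i, h⟩
      rw [← hx0x, hAmv x hxoff ⟨i, h⟩] at this
      simpa using this
    · rw [hxoff i h, zero_mul]
  have hxsol : x ∈ solSet M q :=
    ⟨hxpos, hxw, Finset.sum_eq_zero (fun i _ => hxcomp i)⟩
  have hxsupp : ∀ i, x i ≠ 0 → q i < 0 := by
    intro i hxi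
    by_contra hq
    exact hxi (hxoff i (fun h => hq ((hmemθ i).mp h)))
  have hxnorm : zeroNorm x ≤ s := by
    refine le_trans (Finset.card_le_card ?_) hθ
    intro i hi
    rw [Finset.mem_filter] at hi ⊢
    exact ⟨Finset.mem_univ _, hxsupp i hi.2⟩
  -- uniqueness
  have huniq : ∀ y : Fin n → ℝ, y ∈ solSet M q ∧ zeroNorm y ≤ s ∧
      (∀ i, y i ≠ 0 → q i < 0) → y = x := by
    rintro y ⟨hy, _, hysupp⟩
    have hyoff : ∀ i, i ∉ θ → y i = 0 := by
      intro i hi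
      by_contra hne
      exact hi ((hmemθ i).mpr (hysupp i hne))
    have hycomp : ∀ i, y i * (M.mulVec y i + q i) = 0 := by
      have := (Finset.sum_eq_zero_iff_of_nonneg
        (fun i _ => mul_nonneg (hy.1 i) (hy.2.1 i))).mp hy.2.2
      exact fun i => this i (Finset.mem_univ i)
    have hysol : isSol A (fun j => q j.val) (fun k => y k.val) := by
      refine ⟨fun j => hy.1 j.val, fun j => ?_, fun j => ?_⟩
      · rw [hAmv y hyoff j]; exact hy.2.1 j.val
      · rw [hAmv y hyoff j]; exact hycomp j.val
    have := lcp_unique hA hysol (hx0x ▸ hx0)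
    funext i
    by_cases h : i ∈ θ
    · have := congrFun this ⟨i, h⟩
      simpa [hxθ ⟨i, h⟩] using this
    · rw [hyoff i h, hxoff i h]
  exact ⟨⟨x, hxsol, hxnorm⟩, x, ⟨hxsol, hxnorm, hxsupp⟩, huniq⟩
end

section
/- If M is a P_s-matrix, then for every γ ≥ 0 the level set L_s(f_r, γ) = {x : ‖x‖₀ ≤ s, f_r(x) ≤ γ} is bounded. -/
open Matrix

lemma key_pos {n s : ℕ} {M : Matrix (Fin n) (Fin n) ℝ} (hP : IsPsMatrix s M)
    (T : Finset (Fin n)) (hT : T.card ≤ s) (d : Fin n → ℝ) (hd0 : d ≠ 0)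
    (hsupp : ∀ i ∉ T, d i = 0) (hdn : ∀ i, 0 ≤ d i) (hMd : ∀ i, 0 ≤ M.mulVec d i)
    (hprod : ∀ i, d i * M.mulVec d i ≤ 0) : False := by
  classical
  set T' : Finset (Fin n) := Finset.univ.filter (fun i => d i ≠ 0) with hT'
  have hsub : T' ⊆ T := by
    intro i hi
    simp only [hT', Finset.mem_filter] at hi
    by_contra hc
    exact hi.2 (hsupp i hc)
  have hne : T'.Nonempty := by
    obtain ⟨i, hi⟩ := Function.ne_iff.mp hd0
    exact ⟨i, by simp only [hT', Finset.mem_filter, Finset.mem_univ, true_and]; exact hi⟩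
  have hcard : T'.card ≤ s := le_trans (Finset.card_le_card hsub) hT
  have hpos := hP T' hne hcard
  -- the restricted vector is in the kernel
  have hMd0 : ∀ j ∈ T', M.mulVec d j = 0 := by
    intro j hj
    simp only [hT', Finset.mem_filter] at hj
    have hdj : 0 < d j := lt_of_le_of_ne (hdn j) (Ne.symm hj.2)
    have := hprod j
    nlinarith [hMd j]
  have hdet : (M.submatrix (fun i : T' => (i : Fin n)) (fun i : T' => (i : Fin n))).det = 0 := by
    rw [← Matrix.exists_mulVec_eq_zero_iff]
    refine ⟨fun i : T' => d i, ?_, ?_⟩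
    · obtain ⟨i, hi⟩ := hne
      have : d i ≠ 0 := by simpa [hT'] using (Finset.mem_filter.mp hi).2
      intro h
      exact this (congrFun h ⟨i, hi⟩)
    · funext j
      have : (M.submatrix (fun i : T' => (i : Fin n)) (fun i : T' => (i : Fin n))).mulVec
          (fun i : T' => d i) j = M.mulVec d (j : Fin n) := by
        simp only [Matrix.mulVec, dotProduct, Matrix.submatrix_apply]
        rw [Finset.sum_coe_sort T' (fun i => M (j : Fin n) i * d i)]
        refine (Finset.sum_subset (Finset.subset_univ T') ?_)
        intro i _ hi
        have : d i = 0 := by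
          by_contra hc
          exact hi (by simp [hT', hc])
        simp [this]
      rw [this, hMd0 j j.2]
      rfl
  exact absurd hdet (ne_of_gt hpos)

lemma exists_eps {n s : ℕ} (hn : 0 < n) {M : Matrix (Fin n) (Fin n) ℝ} (hP : IsPsMatrix s M)
    (T : Finset (Fin n)) (hT : T.card ≤ s) :
    ∃ ε > 0, ∀ d : Fin n → ℝ, ‖d‖ = 1 → (∀ i ∉ T, d i = 0) →
      ∃ i, ε ≤ max (max (-(d i)) (-(M.mulVec d i))) (d i * M.mulVec d i) := by
  classical
  set f : (Fin n → ℝ) → Fin n → ℝ :=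
    fun d i => max (max (-(d i)) (-(M.mulVec d i))) (d i * M.mulVec d i) with hf
  set h : (Fin n → ℝ) → ℝ := fun d => ∑ i, max (f d i) 0 with hh
  have hfc : ∀ i, Continuous (fun d => f d i) := by
    intro i
    have hmv : Continuous (fun d : Fin n → ℝ => M.mulVec d i) := by
      simp only [Matrix.mulVec, dotProduct]
      exact continuous_finset_sum _ fun j _ => (continuous_const.mul (continuous_apply j))
    exact (((continuous_apply i).neg.max hmv.neg).max ((continuous_apply i).mul hmv))
  have hhc : Continuous h := continuous_finset_sum _ fun i _ => (hfc i).max continuous_const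
  set K : Set (Fin n → ℝ) :=
    Metric.sphere (0 : Fin n → ℝ) 1 ∩ {d | ∀ i ∉ T, d i = 0} with hK
  have hKc : IsCompact K := by
    apply (isCompact_sphere (0 : Fin n → ℝ) 1).inter_right
    have : {d : Fin n → ℝ | ∀ i ∉ T, d i = 0} =
        ⋂ i : Fin n, {d : Fin n → ℝ | i ∉ T → d i = 0} := by
      ext d; simp [Set.mem_iInter]
    rw [this]
    refine isClosed_iInter fun i => ?_
    by_cases hi : i ∈ T
    · have : {d : Fin n → ℝ | i ∉ T → d i = 0} = Set.univ := by ext d; simp [hi]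
      rw [this]; exact isClosed_univ
    · have : {d : Fin n → ℝ | i ∉ T → d i = 0} = {d | d i = 0} := by ext d; simp [hi]
      rw [this]
      exact isClosed_eq (continuous_apply i) continuous_const
  have hpos : ∀ d ∈ K, 0 < h d := by
    intro d hd
    have hd1 : ‖d‖ = 1 := by simpa using hd.1
    have hd0 : d ≠ 0 := by intro h0; rw [h0] at hd1; simp at hd1
    have : ∃ i, 0 < f d i := by
      by_contra hc
      push_neg at hc
      refine key_pos hP T hT d hd0 hd.2 ?_ ?_ ?_
      · intro i; have := hc i; simp only [hf, max_le_iff] at this; linarith [this.1.1]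
      · intro i; have := hc i; simp only [hf, max_le_iff] at this; linarith [this.1.2]
      · intro i; have := hc i; simp only [hf, max_le_iff] at this; exact this.2
    obtain ⟨i, hi⟩ := this
    have h1 : max (f d i) 0 ≤ h d :=
      Finset.single_le_sum (f := fun j => max (f d j) 0)
        (fun j _ => le_max_right _ _) (Finset.mem_univ i)
    calc 0 < f d i := hi
      _ ≤ max (f d i) 0 := le_max_left _ _
      _ ≤ h d := h1
  rcases K.eq_empty_or_nonempty with hKe | hKne
  · refine ⟨1, one_pos, fun d hd1 hds => ?_⟩
    exfalso
    have : d ∈ K := ⟨by simpa using hd1, hds⟩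
    rw [hKe] at this; exact this
  · obtain ⟨d₀, hd₀K, hd₀min⟩ := hKc.exists_isMinOn hKne hhc.continuousOn
    refine ⟨h d₀ / n, div_pos (hpos d₀ hd₀K) (by exact_mod_cast hn), fun d hd1 hds => ?_⟩
    have hdK : d ∈ K := ⟨by simpa using hd1, hds⟩
    have hsum : ∑ _i : Fin n, (h d₀ / n) ≤ ∑ i, max (f d i) 0 := by
      rw [Finset.sum_const, Finset.card_univ, Fintype.card_fin, nsmul_eq_mul]
      rw [mul_div_cancel₀ _ (by exact_mod_cast hn.ne' : (n:ℝ) ≠ 0)]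
      exact hd₀min hdK
    obtain ⟨i, _, hi⟩ := Finset.exists_le_of_sum_le (Finset.univ_nonempty_iff.mpr ⟨⟨0, hn⟩⟩) hsum
    refine ⟨i, ?_⟩
    have hε : 0 < h d₀ / n := div_pos (hpos d₀ hd₀K) (by exact_mod_cast hn)
    by_contra hc
    push_neg at hc
    have : max (f d i) 0 < h d₀ / n := max_lt hc hε
    exact absurd hi (not_le.mpr this)

lemma bound_T {n s : ℕ} (hn : 0 < n) {r : ℝ} (hr : 2 ≤ r)
    {M : Matrix (Fin n) (Fin n) ℝ} (hP : IsPsMatrix s M) (q : Fin n → ℝ)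
    {γ : ℝ} (hγ : 0 ≤ γ) (T : Finset (Fin n)) (hT : T.card ≤ s) :
    ∃ B : ℝ, ∀ x : Fin n → ℝ, (∀ i ∉ T, x i = 0) → fr r M q x ≤ γ → ‖x‖ ≤ B := by
  obtain ⟨ε, hε, heps⟩ := exists_eps hn hP T hT
  have hr0 : (0:ℝ) < r := by linarith
  set c : ℝ := (r * γ) ^ (1/r : ℝ) with hc
  have hc0 : 0 ≤ c := Real.rpow_nonneg (by positivity) _
  have hcr : c ^ r = r * γ := by
    rw [hc, one_div, Real.rpow_inv_rpow (by positivity) hr0.ne']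
  set Q : ℝ := ‖q‖ with hQ
  have hQ0 : 0 ≤ Q := norm_nonneg q
  refine ⟨max 1 ((c*c + 2*c + Q)/ε), fun x hsupp hfr => ?_⟩
  by_contra hB
  push_neg at hB
  set t : ℝ := ‖x‖ with ht
  have ht1 : 1 < t := lt_of_le_of_lt (le_max_left _ _) hB
  have ht0 : 0 < t := by linarith
  have htB : c*c + 2*c + Q < ε * t := by
    have h2 : (c*c + 2*c + Q)/ε < t := lt_of_le_of_lt (le_max_right _ _) hB
    calc c*c + 2*c + Q = ((c*c + 2*c + Q)/ε) * ε := by field_simp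
    _ < t * ε := by exact mul_lt_mul_of_pos_right h2 hε
    _ = ε * t := mul_comm _ _
  set y : Fin n → ℝ := fun i => M.mulVec x i + q i with hy
  -- each term of fr is ≤ γ
  have hphinn : ∀ (a b : ℝ), 0 ≤ phi r a b := by
    intro a b
    unfold phi
    have h1 : (0:ℝ) ≤ (max a 0) ^ r := Real.rpow_nonneg (le_max_right _ _) _
    have h2 : (0:ℝ) ≤ (max b 0) ^ r := Real.rpow_nonneg (le_max_right _ _) _
    have h3 : (0:ℝ) ≤ (max (-a) 0) ^ r := Real.rpow_nonneg (le_max_right _ _) _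
    have h4 : (0:ℝ) ≤ (max (-b) 0) ^ r := Real.rpow_nonneg (le_max_right _ _) _
    positivity
  have hterm : ∀ i, phi r (x i) (y i) ≤ γ := by
    intro i
    have := Finset.single_le_sum (f := fun i => phi r (x i) (y i))
      (fun j _ => hphinn _ _) (Finset.mem_univ i)
    exact le_trans this hfr
  -- extract the three inequalities
  have hparts : ∀ i, (max (x i) 0) ^ r * (max (y i) 0) ^ r ≤ r * γ ∧
      (max (-(x i)) 0) ^ r ≤ r * γ ∧ (max (-(y i)) 0) ^ r ≤ r * γ := by
    intro i
    have h := hterm i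
    unfold phi at h
    have h1 : (0:ℝ) ≤ (max (x i) 0) ^ r * (max (y i) 0) ^ r :=
      mul_nonneg (Real.rpow_nonneg (le_max_right _ _) _) (Real.rpow_nonneg (le_max_right _ _) _)
    have h3 : (0:ℝ) ≤ (max (-(x i)) 0) ^ r := Real.rpow_nonneg (le_max_right _ _) _
    have h4 : (0:ℝ) ≤ (max (-(y i)) 0) ^ r := Real.rpow_nonneg (le_max_right _ _) _
    have hsum : (max (x i) 0) ^ r * (max (y i) 0) ^ r + (max (-(x i)) 0) ^ r
        + (max (-(y i)) 0) ^ r ≤ r * γ := by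
      have := mul_le_mul_of_nonneg_left h (le_of_lt hr0)
      calc _ = r * ((1/r) * ((max (x i) 0) ^ r * (max (y i) 0) ^ r + (max (-(x i)) 0) ^ r
            + (max (-(y i)) 0) ^ r)) := by field_simp
        _ ≤ r * γ := this
    exact ⟨by linarith, by linarith, by linarith⟩
  -- convert rpow bounds to bounds by c
  have hrc : ∀ m : ℝ, 0 ≤ m → m ^ r ≤ r * γ → m ≤ c := by
    intro m hm h
    by_contra hcm
    push_neg at hcm
    have := Real.rpow_lt_rpow hc0 hcm hr0
    rw [hcr] at this
    linarith
  have hxc : ∀ i, -(x i) ≤ c := by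
    intro i
    have := hrc _ (le_max_right (-(x i)) 0) (hparts i).2.1
    exact le_trans (le_max_left _ _) this
  have hyc : ∀ i, -(y i) ≤ c := by
    intro i
    have := hrc _ (le_max_right (-(y i)) 0) (hparts i).2.2
    exact le_trans (le_max_left _ _) this
  have hpc : ∀ i, max (x i) 0 * max (y i) 0 ≤ c := by
    intro i
    refine hrc _ (mul_nonneg (le_max_right _ _) (le_max_right _ _)) ?_
    rw [Real.mul_rpow (le_max_right _ _) (le_max_right _ _)]
    exact (hparts i).1
  have habs : ∀ i, |x i| ≤ t := fun i => norm_le_pi_norm x i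
  have hqabs : ∀ i, |q i| ≤ Q := fun i => norm_le_pi_norm q i
  -- apply the eps lemma to d = t⁻¹ • x
  set d : Fin n → ℝ := t⁻¹ • x with hd
  have hdnorm : ‖d‖ = 1 := by
    rw [hd, norm_smul, norm_inv, Real.norm_eq_abs, abs_of_pos ht0, ← ht]
    field_simp
  have hdsupp : ∀ i ∉ T, d i = 0 := by
    intro i hi; simp [hd, hsupp i hi]
  obtain ⟨i, hi⟩ := heps d hdnorm hdsupp
  have hMd : M.mulVec d = t⁻¹ • M.mulVec x := by
    rw [hd]; exact M.mulVec_smul t⁻¹ x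
  have hdi : d i = t⁻¹ * x i := rfl
  have hMdi : M.mulVec d i = t⁻¹ * M.mulVec x i := by rw [hMd]; rfl
  have hMxi : M.mulVec x i = y i - q i := by simp [hy]
  rcases le_max_iff.mp hi with h1 | h1
  · rcases le_max_iff.mp h1 with h2 | h2
    · -- ε ≤ -(d i)
      rw [hdi] at h2
      have : ε * t ≤ -(x i) := by
        have := mul_le_mul_of_nonneg_right h2 (le_of_lt ht0)
        calc ε * t ≤ -(t⁻¹ * x i) * t := this
          _ = -(x i) := by field_simp
      linarith [hxc i, mul_nonneg hc0 hc0]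
    · -- ε ≤ -(M.mulVec d i)
      rw [hMdi, hMxi] at h2
      have : ε * t ≤ -(y i) + q i := by
        have := mul_le_mul_of_nonneg_right h2 (le_of_lt ht0)
        calc ε * t ≤ -(t⁻¹ * (y i - q i)) * t := this
          _ = -(y i) + q i := by field_simp; ring
      have hq1 : q i ≤ Q := le_trans (le_abs_self _) (hqabs i)
      linarith [hyc i, mul_nonneg hc0 hc0]
  · -- ε ≤ d i * M.mulVec d i
    rw [hdi, hMdi, hMxi] at h1
    have hkey : ε * t * t ≤ x i * (y i - q i) := by
      have := mul_le_mul_of_nonneg_right h1 (le_of_lt (mul_pos ht0 ht0))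
      calc ε * t * t = ε * (t * t) := by ring
        _ ≤ (t⁻¹ * x i * (t⁻¹ * (y i - q i))) * (t * t) := this
        _ = x i * (y i - q i) := by field_simp
    -- bound x i * y i ≤ c*c + c
    have hxyb : x i * y i ≤ c*c + c := by
      rcases le_or_gt (x i) 0 with hx0 | hx0
      · rcases le_or_gt (y i) 0 with hy0 | hy0
        · have h1 : (-(x i)) * (-(y i)) ≤ c * c :=
            mul_le_mul (hxc i) (hyc i) (by linarith) hc0
          linarith [h1, hc0]
        · have h1 : (0:ℝ) ≤ (-(x i)) * (y i) := mul_nonneg (by linarith) hy0.le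
          nlinarith
      · rcases le_or_gt (y i) 0 with hy0 | hy0
        · have h1 : (0:ℝ) ≤ (x i) * (-(y i)) := mul_nonneg hx0.le (by linarith)
          nlinarith [mul_nonneg hc0 hc0]
        · have h2 := hpc i
          rw [max_eq_left hx0.le, max_eq_left hy0.le] at h2
          linarith [h2, mul_nonneg hc0 hc0]
    have hxq : x i * q i ≥ -(t * Q) := by
      have h1 : |x i * q i| ≤ t * Q := by
        rw [abs_mul]
        exact mul_le_mul (habs i) (hqabs i) (abs_nonneg _) (by linarith)
      linarith [neg_abs_le (x i * q i)]
    -- ε t² ≤ x i * y i - x i * q i ≤ c*c + c + tQ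
    have hfin : ε * t * t ≤ c*c + c + t * Q := by linarith [hkey, hxyb, hxq]
    have h₁ : (c*c + 2*c + Q) * t < ε * t * t := by
      calc (c*c + 2*c + Q) * t < (ε * t) * t := mul_lt_mul_of_pos_right htB ht0
        _ = ε * t * t := by ring
    have h₂ : c*c + 2*c ≤ (c*c + 2*c) * t :=
      le_mul_of_one_le_right (by positivity) ht1.le
    linarith [h₁, h₂, hfin, hc0]


theorem stmt_16 {n : ℕ} (s : ℕ) (hs : 0 < s) (hsn : s ≤ n)
    (r : ℝ) (hr : 2 ≤ r) (M : Matrix (Fin n) (Fin n) ℝ) (hP : IsPsMatrix s M)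
    (q : Fin n → ℝ) (γ : ℝ) (hγ : 0 ≤ γ) :
    Bornology.IsBounded {x : Fin n → ℝ | zeroNorm x ≤ s ∧ fr r M q x ≤ γ} := by
  classical
  have hn : 0 < n := lt_of_lt_of_le hs hsn
  have hTb : ∀ T : Finset (Fin n), ∃ B : ℝ, T.card ≤ s →
      ∀ x : Fin n → ℝ, (∀ i ∉ T, x i = 0) → fr r M q x ≤ γ → ‖x‖ ≤ B := by
    intro T
    by_cases hT : T.card ≤ s
    · obtain ⟨B, hB⟩ := bound_T hn hr hP q hγ T hT
      exact ⟨B, fun _ => hB⟩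
    · exact ⟨0, fun h => absurd h hT⟩
  choose B hB using hTb
  rw [isBounded_iff_forall_norm_le]
  refine ⟨Finset.univ.sup' ⟨∅, Finset.mem_univ _⟩ B, fun x hx => ?_⟩
  obtain ⟨hx1, hx2⟩ := hx
  set T : Finset (Fin n) := Finset.univ.filter (fun i => x i ≠ 0) with hTdef
  have hsupp : ∀ i ∉ T, x i = 0 := by
    intro i hi
    by_contra hc
    exact hi (by simp [hTdef, hc])
  have hcard : T.card ≤ s := hx1
  have := hB T hcard x hsupp hx2
  exact le_trans this (Finset.le_sup' B (Finset.mem_univ T))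
end

section
/- Every solution x of the sparse LCP (x ∈ sol(M,q) with ‖x‖₀ ≤ s) is a stationary point of the sparsity constrained problem min f_r(x) subject to ‖x‖₀ ≤ s; i.e., ∇f_r(x) = 0 holds at x, which in particular satisfies the stationarity conditions (∇_T f_r(x) = 0 for T = supp(x) when ‖x‖₀ = s, and ∇f_r(x) = 0 when ‖x‖₀ < s). -/
open Matrix

/-- The number of nonzero entries of a vector. -/
-- auxiliary lemmas
lemma hderiv (r : ℝ) (hr : 2 ≤ r) (t : ℝ) :
    HasDerivAt (fun t : ℝ => (max t 0) ^ r) (r * (max t 0) ^ (r - 1)) t := by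
  have hr1 : (1:ℝ) < r := by linarith
  rcases lt_trichotomy t 0 with ht | ht | ht
  · have h0 : max t 0 = 0 := max_eq_right ht.le
    rw [h0, Real.zero_rpow (by linarith : r - 1 ≠ 0), mul_zero]
    have heq : (fun t : ℝ => (max t 0) ^ r) =ᶠ[nhds t] fun _ => (0:ℝ)^r := by
      filter_upwards [Iio_mem_nhds ht] with s hs
      rw [max_eq_right (le_of_lt hs)]
    exact (hasDerivAt_const t ((0:ℝ)^r)).congr_of_eventuallyEq heq
  · subst ht
    rw [max_self, Real.zero_rpow (by linarith : r - 1 ≠ 0), mul_zero]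
    rw [hasDerivAt_iff_tendsto_slope]
    have hle : ∀ s : ℝ, s ≠ 0 → slope (fun t : ℝ => (max t 0) ^ r) 0 s ∈ Set.Icc 0 (|s| ^ (r-1)) := by
      intro s hs
      have hsl : slope (fun t : ℝ => (max t 0) ^ r) 0 s = (max s 0) ^ r / s := by
        simp [slope, Real.zero_rpow (by linarith : r ≠ 0)]
        ring
      rw [hsl]
      rcases lt_or_gt_of_ne hs with h | h
      · rw [max_eq_right h.le, Real.zero_rpow (by linarith : r ≠ 0), zero_div]
        exact ⟨le_refl 0, by positivity⟩
      · rw [max_eq_left h.le, abs_of_pos h]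
        refine ⟨by positivity, ?_⟩
        rw [div_le_iff₀ h, ← Real.rpow_add_one (ne_of_gt h) (r-1)]
        simp
    have htend : Filter.Tendsto (fun s : ℝ => |s| ^ (r-1)) (nhdsWithin 0 {(0:ℝ)}ᶜ) (nhds 0) := by
      have hc : ContinuousAt (fun s : ℝ => |s| ^ (r-1)) 0 := by
        have h1 : ContinuousAt (fun u : ℝ => u ^ (r-1)) (|(0:ℝ)|) :=
          Real.continuousAt_rpow_const _ _ (Or.inr (by linarith))
        exact h1.comp continuous_abs.continuousAt
      have := hc.tendsto.mono_left (nhdsWithin_le_nhds (s := {(0:ℝ)}ᶜ))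
      simpa [Real.zero_rpow (by linarith : r - 1 ≠ 0)] using this
    refine tendsto_of_tendsto_of_tendsto_of_le_of_le' tendsto_const_nhds htend ?_ ?_
    · filter_upwards [self_mem_nhdsWithin] with s hs
      exact (hle s hs).1
    · filter_upwards [self_mem_nhdsWithin] with s hs
      exact (hle s hs).2
  · have h0 : max t 0 = t := max_eq_left ht.le
    rw [h0]
    have heq : (fun t : ℝ => (max t 0) ^ r) =ᶠ[nhds t] fun s : ℝ => s ^ r := by
      filter_upwards [Ioi_mem_nhds ht] with s hs
      rw [max_eq_left (le_of_lt hs)]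
    exact (Real.hasDerivAt_rpow_const (Or.inl (ne_of_gt ht))).congr_of_eventuallyEq heq

lemma phi_fderiv_zero (r : ℝ) (hr : 2 ≤ r) (a b : ℝ) (ha : 0 ≤ a) (hb : 0 ≤ b)
    (hab : a * b = 0) :
    HasFDerivAt (fun p : ℝ × ℝ => phi r p.1 p.2) (0 : ℝ × ℝ →L[ℝ] ℝ) (a, b) := by
  have hr1 : (1:ℝ) < r := by linarith
  set H : ℝ → ℝ := fun t => (max t 0) ^ r with hH
  set H' : ℝ → ℝ := fun t => r * (max t 0) ^ (r - 1) with hH'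
  have h1 : HasFDerivAt (fun p : ℝ × ℝ => H p.1)
      (H' a • ContinuousLinearMap.fst ℝ ℝ ℝ) (a, b) :=
    by have := (hderiv r hr a).comp_hasFDerivAt (a, b) (hasFDerivAt_fst (𝕜 := ℝ) (p := (a, b))); exact this
  have h2 : HasFDerivAt (fun p : ℝ × ℝ => H p.2)
      (H' b • ContinuousLinearMap.snd ℝ ℝ ℝ) (a, b) :=
    by have := (hderiv r hr b).comp_hasFDerivAt (a, b) (hasFDerivAt_snd (𝕜 := ℝ) (p := (a, b))); exact this
  have h3 : HasFDerivAt (fun p : ℝ × ℝ => H (-p.1))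
      (H' (-a) • -(ContinuousLinearMap.fst ℝ ℝ ℝ)) (a, b) :=
    by have := (hderiv r hr (-a)).comp_hasFDerivAt (a, b) ((hasFDerivAt_fst (𝕜 := ℝ) (p := (a, b))).neg); exact this
  have h4 : HasFDerivAt (fun p : ℝ × ℝ => H (-p.2))
      (H' (-b) • -(ContinuousLinearMap.snd ℝ ℝ ℝ)) (a, b) :=
    by have := (hderiv r hr (-b)).comp_hasFDerivAt (a, b) ((hasFDerivAt_snd (𝕜 := ℝ) (p := (a, b))).neg); exact this
  have hmain : HasFDerivAt (fun p : ℝ × ℝ => phi r p.1 p.2)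
      ((1/r) • (H a • (H' b • ContinuousLinearMap.snd ℝ ℝ ℝ)
        + H b • (H' a • ContinuousLinearMap.fst ℝ ℝ ℝ)
        + H' (-a) • -(ContinuousLinearMap.fst ℝ ℝ ℝ)
        + H' (-b) • -(ContinuousLinearMap.snd ℝ ℝ ℝ))) (a, b) := by
    have := (((h1.mul h2).add h3).add h4).const_smul (1/r)
    convert this using 1
    all_goals rfl
  -- now show the derivative is 0
  have hHa' : H' (-a) = 0 := by
    simp only [hH']
    rw [max_eq_right (by linarith : -a ≤ 0), Real.zero_rpow (by linarith : r - 1 ≠ 0), mul_zero]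
  have hHb' : H' (-b) = 0 := by
    simp only [hH']
    rw [max_eq_right (by linarith : -b ≤ 0), Real.zero_rpow (by linarith : r - 1 ≠ 0), mul_zero]
  have hzero : H a • (H' b • ContinuousLinearMap.snd ℝ ℝ ℝ)
        + H b • (H' a • ContinuousLinearMap.fst ℝ ℝ ℝ)
        + H' (-a) • -(ContinuousLinearMap.fst ℝ ℝ ℝ)
        + H' (-b) • -(ContinuousLinearMap.snd ℝ ℝ ℝ) = 0 := by
    rcases mul_eq_zero.mp hab with h | h
    · have hHa : H a = 0 := by
        simp only [hH', h, hH]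
        rw [max_self, Real.zero_rpow (by linarith : r ≠ 0)]
      have hHa2 : H' a = 0 := by
        simp only [hH', h]
        rw [max_self, Real.zero_rpow (by linarith : r - 1 ≠ 0), mul_zero]
      rw [hHa, hHa2, hHa', hHb']
      simp
    · have hHb : H b = 0 := by
        simp only [hH', h, hH]
        rw [max_self, Real.zero_rpow (by linarith : r ≠ 0)]
      have hHb2 : H' b = 0 := by
        simp only [hH', h]
        rw [max_self, Real.zero_rpow (by linarith : r - 1 ≠ 0), mul_zero]
      rw [hHb, hHb2, hHa', hHb']
      simp
  rw [hzero, smul_zero] at hmain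
  exact hmain

theorem stmt_17 {n : ℕ} (s : ℕ) (r : ℝ) (hr : 2 ≤ r)
    (M : Matrix (Fin n) (Fin n) ℝ) (q : Fin n → ℝ)
    (x : Fin n → ℝ) (hx : x ∈ solSet M q) (hxs : zeroNorm x ≤ s) :
    fderiv ℝ (fr r M q) x = 0 := by
  obtain ⟨hx1, hx2, hx3⟩ := hx
  have hcomp : ∀ i, x i * (M.mulVec x i + q i) = 0 := by
    intro i
    have h := (Finset.sum_eq_zero_iff_of_nonneg
      (fun i _ => mul_nonneg (hx1 i) (hx2 i))).mp hx3
    exact h i (Finset.mem_univ i)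
  have hterm : ∀ i : Fin n,
      HasFDerivAt (fun z : Fin n → ℝ => phi r (z i) (M.mulVec z i + q i))
        (0 : (Fin n → ℝ) →L[ℝ] ℝ) x := by
    intro i
    have T : (Fin n → ℝ) →L[ℝ] ℝ :=
      (ContinuousLinearMap.proj i).comp (M.mulVecLin).toContinuousLinearMap
    have h2 : HasFDerivAt (fun z : Fin n → ℝ => M.mulVec z i + q i)
        ((ContinuousLinearMap.proj i).comp (M.mulVecLin).toContinuousLinearMap) x := by
      have := (((ContinuousLinearMap.proj i).comp
        (M.mulVecLin).toContinuousLinearMap).hasFDerivAt (x := x)).add_const (q i)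
      exact this
    have h1 : HasFDerivAt (fun z : Fin n → ℝ => z i)
        (ContinuousLinearMap.proj i : (Fin n → ℝ) →L[ℝ] ℝ) x := by
      exact (ContinuousLinearMap.proj i : (Fin n → ℝ) →L[ℝ] ℝ).hasFDerivAt
    have hg := HasFDerivAt.prodMk h1 h2
    have hphi := phi_fderiv_zero r hr (x i) (M.mulVec x i + q i)
      (hx1 i) (hx2 i) (hcomp i)
    have := hphi.comp x hg
    rw [ContinuousLinearMap.zero_comp] at this
    exact this
  have hsum : HasFDerivAt (fr r M q) (0 : (Fin n → ℝ) →L[ℝ] ℝ) x := by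
    have := HasFDerivAt.fun_sum (fun i (_ : i ∈ Finset.univ) => hterm i)
    simp only [Finset.sum_const_zero] at this
    exact this
  exact hsum.fderiv
end
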